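/- arXiv:2105.00778 — 4 statements merged into one kernel-verified Lean document; each statement's English description precedes it below -/
import Mathlib

section
/- Let l ∈ T(V*) and g ∈ G(V) be group-like. Then for all N > 2·deg(l)·|l|·|π_{≤deg(l)}(g)|, one has |exp(⟨l, g⟩) − ⟨exp^⧢(l), π_{≤N}(g)⟩| ≤ 4·exp(⟨l, 1⟩) · (|l|·|π_{≤deg(l)}(g)|)^{⌊N/deg(l)⌋+1} / (⌊N/deg(l)⌋+1)!. -/
/- Shuffle algebra on words: T(V*) modeled as finitely supported functions on
   words over the alphabet `Fin d`, T((V)) as arbitrary functions on words. -/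

noncomputable section

abbrev Word (d : ℕ) := List (Fin d)

/-- The shuffle product of two words, as a formal linear combination of words. -/
def shuffleWord {d : ℕ} : Word d → Word d → (Word d →₀ ℝ)
  | [], v => Finsupp.single v 1
  | w, [] => Finsupp.single w 1
  | i :: w, j :: v =>
      (shuffleWord w (j :: v)).mapDomain (i :: ·) +
      (shuffleWord (i :: w) v).mapDomain (j :: ·)
  termination_by w v => w.length + v.length
  decreasing_by all_goals (simp [List.length]; try omega)

/-- Bilinear extension of the shuffle product to `T(V*)`. -/
def shuffle {d : ℕ} (a b : Word d →₀ ℝ) : Word d →₀ ℝ :=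
  a.sum fun w cw => b.sum fun v cv => (cw * cv) • shuffleWord w v

/-- `n`-fold shuffle power, with `l^{⧢0} = ∅`. -/
def shufflePow {d : ℕ} (l : Word d →₀ ℝ) : ℕ → (Word d →₀ ℝ)
  | 0 => Finsupp.single [] 1
  | n + 1 => shuffle l (shufflePow l n)

/-- The natural pairing `⟨·,·⟩ : T(V*) × T((V)) → ℝ`. -/
def pairing {d : ℕ} (l : Word d →₀ ℝ) (g : Word d → ℝ) : ℝ :=
  l.sum fun w c => c * g w

/-- Group-like elements of `T((V))`. -/
def IsGroupLike {d : ℕ} (g : Word d → ℝ) : Prop :=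
  g ≠ 0 ∧ ∀ a b : Word d →₀ ℝ, pairing (shuffle a b) g = pairing a g * pairing b g

/-- `l̃`: the part of `l` with zero constant (empty-word) coefficient. -/
def tilde {d : ℕ} (l : Word d →₀ ℝ) : Word d →₀ ℝ := l - Finsupp.single [] (l [])

/-- The shuffle exponential `exp^⧢(l) = exp(a₀) Σ_{r≥0} l̃^{⧢r}/r!`, as an element of the
extended tensor algebra `T((V*))`; the sum is finite in each word-component since
`π_{≤N}(l̃^{⧢r}) = 0` for `r > N`. -/
def expShuffle {d : ℕ} (l : Word d →₀ ℝ) : Word d → ℝ :=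
  fun w => Real.exp (l []) *
    ∑ r ∈ Finset.range (w.length + 1), ((r.factorial : ℝ))⁻¹ * shufflePow (tilde l) r w

/-- Shuffle product of two elements of the extended tensor algebra `T((V*))`; the coefficient
of `w` in `u ⧢ v` vanishes unless both `u` and `v` are subsequences of `w`, so the sum is
finite. -/
def shuffleF {d : ℕ} (a b : Word d → ℝ) : Word d → ℝ :=
  fun w => ∑ p ∈ w.sublists.toFinset ×ˢ w.sublists.toFinset,
    a p.1 * b p.2 * shuffleWord p.1 p.2 w

/-- The ℓ¹-type norm `|l| = Σ_w |l_w|` on `T(V*)`. -/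
def normT {d : ℕ} (l : Word d →₀ ℝ) : ℝ := ∑ w ∈ l.support, |l w|

/-- The degree of `l`: the maximal length of a word in its support. -/
def degT {d : ℕ} (l : Word d →₀ ℝ) : ℕ := l.support.sup List.length

/-- `|π_{≤N}(g)|`: the norm of the truncation of `g ∈ T((V))`, i.e. the supremum of `|g_w|`
over words `w` of length at most `N` (the ℓ∞-norms on the tensor levels). -/
def normTrunc {d : ℕ} (g : Word d → ℝ) (N : ℕ) : ℝ :=
  ⨆ w : Word d, if w.length ≤ N then |g w| else 0

/-- `⟨a, π_{≤N}(g)⟩`: pairing of `a ∈ T((V*))` with the truncation of `g`.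
(All but finitely many summands vanish.) -/
def pairTrunc {d : ℕ} (a : Word d → ℝ) (N : ℕ) (g : Word d → ℝ) : ℝ :=
  ∑' w : Word d, if w.length ≤ N then a w * g w else 0

lemma pairing_single {d : ℕ} (w : Word d) (c : ℝ) (g : Word d → ℝ) :
    pairing (Finsupp.single w c) g = c * g w := by
  simp [pairing, Finsupp.sum_single_index]

lemma shuffleWord_nil_left {d : ℕ} (v : Word d) : shuffleWord [] v = Finsupp.single v 1 := by
  cases v <;> simp [shuffleWord]

lemma shuffleWord_nil_right {d : ℕ} (v : Word d) : shuffleWord v [] = Finsupp.single v 1 := by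
  cases v <;> simp [shuffleWord]

lemma shuffleWord_cons {d : ℕ} (i j : Fin d) (w v : Word d) :
    shuffleWord (i :: w) (j :: v) =
      (shuffleWord w (j :: v)).mapDomain (i :: ·) +
      (shuffleWord (i :: w) v).mapDomain (j :: ·) := by
  rw [shuffleWord]

lemma shuffleWord_homog {d : ℕ} (u v : Word d) : ∀ w, shuffleWord u v w ≠ 0 →
    w.length = u.length + v.length := by
  induction u, v using shuffleWord.induct with
  | case1 v =>
      intro w hw
      rw [shuffleWord_nil_left, Finsupp.single_apply] at hw
      split at hw
      · subst ‹v = w›; simp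
      · simp at hw
  | case2 u h =>
      intro w hw
      rw [shuffleWord_nil_right, Finsupp.single_apply] at hw
      split at hw
      · subst ‹u = w›; simp
      · simp at hw
  | case3 i w j v ih1 ih2 =>
      intro x hx
      rw [shuffleWord_cons] at hx
      have hx' : x ∈ ((shuffleWord w (j :: v)).mapDomain (i :: ·) +
          (shuffleWord (i :: w) v).mapDomain (j :: ·)).support := Finsupp.mem_support_iff.2 hx
      rcases Finset.mem_union.1 (Finsupp.support_add hx') with h | h
      · obtain ⟨y, hy, rfl⟩ := Finset.mem_image.1 (Finsupp.mapDomain_support h)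
        have := ih1 y (Finsupp.mem_support_iff.1 hy)
        simp [this]; omega
      · obtain ⟨y, hy, rfl⟩ := Finset.mem_image.1 (Finsupp.mapDomain_support h)
        have := ih2 y (Finsupp.mem_support_iff.1 hy)
        simp [this]; omega
lemma pairing_add {d : ℕ} (a b : Word d →₀ ℝ) (g : Word d → ℝ) :
    pairing (a + b) g = pairing a g + pairing b g := by
  unfold pairing
  apply Finsupp.sum_add_index' (by simp) (by intro w c1 c2; ring)

lemma pairing_smul {d : ℕ} (c : ℝ) (a : Word d →₀ ℝ) (g : Word d → ℝ) :
    pairing (c • a) g = c * pairing a g := by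
  unfold pairing
  rw [Finsupp.sum_smul_index (by simp), Finsupp.mul_sum]
  congr 1; ext w c'; ring

lemma shuffle_single_single {d : ℕ} (u v : Word d) :
    shuffle (Finsupp.single u (1:ℝ)) (Finsupp.single v 1) = shuffleWord u v := by
  unfold shuffle
  rw [Finsupp.sum_single_index (by simp [Finsupp.sum_single_index]),
    Finsupp.sum_single_index (by simp)]
  simp

lemma pairing_shuffleWord {d : ℕ} {g : Word d → ℝ} (hg : IsGroupLike g) (u v : Word d) :
    pairing (shuffleWord u v) g = g u * g v := by
  have := hg.2 (Finsupp.single u 1) (Finsupp.single v 1)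
  rw [shuffle_single_single] at this
  simpa [pairing_single] using this

lemma groupLike_empty {d : ℕ} {g : Word d → ℝ} (hg : IsGroupLike g) : g [] = 1 := by
  have h1 := pairing_shuffleWord hg [] []
  rw [shuffleWord_nil_left, pairing_single, one_mul] at h1
  by_contra hne
  have h0 : g [] = 0 := by
    have hz : g [] * (1 - g []) = 0 := by nlinarith
    rcases mul_eq_zero.1 hz with h | h
    · exact h
    · exact absurd (by linarith) hne
  apply hg.1
  funext w
  have h2 := pairing_shuffleWord hg w []
  rw [shuffleWord_nil_right, pairing_single, one_mul] at h2
  show g w = 0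
  rw [h2, h0, mul_zero]
/-- Pairing of the degree-`n` part of `a` with `g`. -/
def Sdeg {d : ℕ} (g : Word d → ℝ) (a : Word d →₀ ℝ) (n : ℕ) : ℝ :=
  a.sum fun w c => if w.length = n then c * g w else 0

lemma Sdeg_add {d : ℕ} (g : Word d → ℝ) (a b : Word d →₀ ℝ) (n : ℕ) :
    Sdeg g (a + b) n = Sdeg g a n + Sdeg g b n := by
  unfold Sdeg
  apply Finsupp.sum_add_index' (by simp) (by intro w c1 c2; split <;> ring)

lemma Sdeg_smul {d : ℕ} (g : Word d → ℝ) (c : ℝ) (a : Word d →₀ ℝ) (n : ℕ) :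
    Sdeg g (c • a) n = c * Sdeg g a n := by
  unfold Sdeg
  rw [Finsupp.sum_smul_index (by simp), Finsupp.mul_sum]
  apply Finsupp.sum_congr
  intro w _
  split <;> ring

lemma Sdeg_eq_of_homog {d : ℕ} (g : Word d → ℝ) (c : Word d →₀ ℝ) (m : ℕ)
    (hc : ∀ w, c w ≠ 0 → w.length = m) (n : ℕ) :
    Sdeg g c n = if m = n then pairing c g else 0 := by
  unfold Sdeg pairing
  split_ifs with h
  · subst h
    apply Finsupp.sum_congr
    intro w hw
    rw [if_pos (hc w (Finsupp.mem_support_iff.1 hw))]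
  · apply Finset.sum_eq_zero
    intro w hw
    simp only []
    rw [if_neg]
    intro he
    exact h ((hc w (Finsupp.mem_support_iff.1 hw)) ▸ he)

lemma Sdeg_shuffleWord {d : ℕ} {g : Word d → ℝ} (hg : IsGroupLike g) (u v : Word d) (n : ℕ) :
    Sdeg g (shuffleWord u v) n = if u.length + v.length = n then g u * g v else 0 := by
  rw [Sdeg_eq_of_homog g _ (u.length + v.length) (shuffleWord_homog u v),
    pairing_shuffleWord hg]

lemma ite_conv_aux (p q n : ℕ) (A B : ℝ) :
    ∑ i ∈ Finset.range (n+1), (if p = i then A else 0) * (if q = n - i then B else 0) =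
      if p + q = n then A * B else 0 := by
  have h : ∀ i ∈ Finset.range (n+1),
      (if p = i then A else 0) * (if q = n - i then B else 0) =
      if i = p then (if q = n - i then A * B else 0) else 0 := by
    intro i _
    by_cases h1 : p = i <;> by_cases h2 : q = n - i <;> simp [h1, h2, eq_comm]
  rw [Finset.sum_congr rfl h, Finset.sum_ite_eq' (Finset.range (n+1))]
  simp only [Finset.mem_range]
  split_ifs with h1 h2 h3 <;> try rfl
  · omega
  · omega
  · omega
lemma Sdeg_shuffle {d : ℕ} {g : Word d → ℝ} (hg : IsGroupLike g) (a b : Word d →₀ ℝ) (n : ℕ) :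
    Sdeg g (shuffle a b) n = ∑ i ∈ Finset.range (n+1), Sdeg g a i * Sdeg g b (n-i) := by
  have key : Sdeg g (shuffle a b) n =
      ∑ w ∈ a.support, ∑ v ∈ b.support,
        (a w * b v) * (if w.length + v.length = n then g w * g v else 0) := by
    unfold shuffle
    rw [Finsupp.sum]
    have hs2 : Sdeg g (∑ w ∈ a.support, b.sum fun v cv => (a w * cv) • shuffleWord w v) n =
        ∑ w ∈ a.support, Sdeg g (b.sum fun v cv => (a w * cv) • shuffleWord w v) n := by
      classical
      induction a.support using Finset.induction with
      | empty => simp [Sdeg]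
      | insert _ _ hne ih =>
          rw [Finset.sum_insert hne, Finset.sum_insert hne, Sdeg_add, ih]
    rw [hs2]
    refine Finset.sum_congr rfl fun w _ => ?_
    rw [Finsupp.sum]
    have hs : Sdeg g (∑ v ∈ b.support, (a w * b v) • shuffleWord w v) n =
        ∑ v ∈ b.support, Sdeg g ((a w * b v) • shuffleWord w v) n := by
      classical
      induction b.support using Finset.induction with
      | empty => simp [Sdeg]
      | insert _ _ hne ih =>
          rw [Finset.sum_insert hne, Finset.sum_insert hne, Sdeg_add, ih]
    rw [hs]
    refine Finset.sum_congr rfl fun v _ => ?_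
    rw [Sdeg_smul, Sdeg_shuffleWord hg]
  have rhs : ∑ i ∈ Finset.range (n+1), Sdeg g a i * Sdeg g b (n-i) =
      ∑ w ∈ a.support, ∑ v ∈ b.support,
        (if w.length + v.length = n then (a w * g w) * (b v * g v) else 0) := by
    have step1 : ∀ i, Sdeg g a i * Sdeg g b (n-i) =
        ∑ w ∈ a.support, ∑ v ∈ b.support,
          (if w.length = i then a w * g w else 0) * (if v.length = n - i then b v * g v else 0) := by
      intro i
      unfold Sdeg
      rw [Finsupp.sum, Finsupp.sum, Finset.sum_mul_sum]
    calc ∑ i ∈ Finset.range (n+1), Sdeg g a i * Sdeg g b (n-i)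
        = ∑ i ∈ Finset.range (n+1), ∑ w ∈ a.support, ∑ v ∈ b.support,
          (if w.length = i then a w * g w else 0) * (if v.length = n - i then b v * g v else 0) :=
          Finset.sum_congr rfl fun i _ => step1 i
      _ = ∑ w ∈ a.support, ∑ i ∈ Finset.range (n+1), ∑ v ∈ b.support,
          (if w.length = i then a w * g w else 0) * (if v.length = n - i then b v * g v else 0) :=
          Finset.sum_comm
      _ = ∑ w ∈ a.support, ∑ v ∈ b.support, ∑ i ∈ Finset.range (n+1),
          (if w.length = i then a w * g w else 0) * (if v.length = n - i then b v * g v else 0) :=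
          Finset.sum_congr rfl fun w _ => Finset.sum_comm
      _ = ∑ w ∈ a.support, ∑ v ∈ b.support,
          (if w.length + v.length = n then (a w * g w) * (b v * g v) else 0) :=
          Finset.sum_congr rfl fun w _ => Finset.sum_congr rfl fun v _ =>
            ite_conv_aux w.length v.length n (a w * g w) (b v * g v)
  rw [key, rhs]
  refine Finset.sum_congr rfl fun w _ => Finset.sum_congr rfl fun v _ => ?_
  split_ifs with h <;> ring
lemma sum_Sdeg {d : ℕ} (g : Word d → ℝ) (c : Word d →₀ ℝ) (K : ℕ) :
    ∑ n ∈ Finset.range K, Sdeg g c n = ∑ w ∈ c.support, if w.length < K then c w * g w else 0 := by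
  unfold Sdeg
  simp only [Finsupp.sum]
  rw [Finset.sum_comm]
  refine Finset.sum_congr rfl fun w _ => ?_
  rw [Finset.sum_ite_eq (Finset.range K) w.length (fun _ => c w * g w)]
  simp [Finset.mem_range]

lemma support_shuffle {d : ℕ} (a b : Word d →₀ ℝ) (w : Word d) (hw : shuffle a b w ≠ 0) :
    ∃ u v, a u ≠ 0 ∧ b v ≠ 0 ∧ w.length = u.length + v.length := by
  unfold shuffle at hw
  have h1 := Finsupp.support_sum (Finsupp.mem_support_iff.2 hw)
  rcases Finset.mem_biUnion.1 h1 with ⟨u, hu, hw1⟩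
  have h2 := Finsupp.support_sum hw1
  rcases Finset.mem_biUnion.1 h2 with ⟨v, hv, hw2⟩
  have h3 : w ∈ (shuffleWord u v).support := by
    have := Finsupp.support_smul (b := a u * b v) (g := shuffleWord u v)
    exact this hw2
  exact ⟨u, v, Finsupp.mem_support_iff.1 hu, Finsupp.mem_support_iff.1 hv,
    shuffleWord_homog u v w (Finsupp.mem_support_iff.1 h3)⟩

lemma support_tilde {d : ℕ} (l : Word d →₀ ℝ) (w : Word d) (hw : tilde l w ≠ 0) :
    1 ≤ w.length ∧ w.length ≤ degT l := by
  unfold tilde at hw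
  have hne : w ≠ [] := by
    rintro rfl
    simp at hw
  constructor
  · cases w with
    | nil => exact absurd rfl hne
    | cons i w => simp
  · have hlw : l w ≠ 0 := by
      intro h0
      apply hw
      rw [Finsupp.sub_apply, h0, Finsupp.single_apply, if_neg (by exact fun h => hne h.symm)]
      ring
    exact Finset.le_sup (f := List.length) (Finsupp.mem_support_iff.2 hlw)

lemma support_shufflePow {d : ℕ} (l : Word d →₀ ℝ) (r : ℕ) (w : Word d)
    (hw : shufflePow (tilde l) r w ≠ 0) : r ≤ w.length ∧ w.length ≤ r * degT l := by
  induction r generalizing w with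
  | zero =>
      rw [shufflePow] at hw
      have : w = [] := by
        by_contra hne
        rw [Finsupp.single_apply, if_neg (fun h => hne h.symm)] at hw
        exact hw rfl
      simp [this]
  | succ r ih =>
      rw [shufflePow] at hw
      rcases support_shuffle _ _ w hw with ⟨u, v, hu, hv, hlen⟩
      rcases support_tilde l u hu with ⟨h1, h2⟩
      rcases ih v hv with ⟨h3, h4⟩
      constructor
      · omega
      · have he : (r+1) * degT l = degT l + r * degT l := by ring
        omega
lemma normTrunc_nonneg {d : ℕ} (g : Word d → ℝ) (n : ℕ) : 0 ≤ normTrunc g n := by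
  apply Real.iSup_nonneg
  intro w
  split <;> positivity

lemma abs_le_normTrunc {d : ℕ} (g : Word d → ℝ) (n : ℕ) (w : Word d) (hw : w.length ≤ n) :
    |g w| ≤ normTrunc g n := by
  have hfin : {v : Word d | v.length ≤ n}.Finite := List.finite_length_le (Fin d) n
  have hbdd : BddAbove (Set.range fun v : Word d => if v.length ≤ n then |g v| else 0) := by
    obtain ⟨M, hM⟩ := ((hfin.image (fun v => |g v|))).bddAbove
    refine ⟨max M 0, ?_⟩
    rintro y ⟨v, rfl⟩
    dsimp only
    split_ifs with h
    · exact le_max_of_le_left (hM (Set.mem_image_of_mem _ h))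
    · exact le_max_right _ _
  have := le_ciSup hbdd w
  rw [if_pos hw] at this
  exact this

lemma sum_abs_Sdeg_le {d : ℕ} (g : Word d → ℝ) (c : Word d →₀ ℝ) (C : ℝ) (hC0 : 0 ≤ C)
    (hC : ∀ w, c w ≠ 0 → |g w| ≤ C) (K : ℕ) :
    ∑ i ∈ Finset.range K, |Sdeg g c i| ≤ normT c * C := by
  have habs : ∀ i, |Sdeg g c i| ≤ ∑ w ∈ c.support, if w.length = i then |c w| * C else 0 := by
    intro i
    unfold Sdeg
    rw [Finsupp.sum]
    refine (Finset.abs_sum_le_sum_abs _ _).trans (Finset.sum_le_sum fun w hw => ?_)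
    split_ifs with h
    · rw [abs_mul]
      exact mul_le_mul_of_nonneg_left (hC w (Finsupp.mem_support_iff.1 hw)) (abs_nonneg _)
    · simp
  calc ∑ i ∈ Finset.range K, |Sdeg g c i|
      ≤ ∑ i ∈ Finset.range K, ∑ w ∈ c.support, if w.length = i then |c w| * C else 0 :=
        Finset.sum_le_sum fun i _ => habs i
    _ = ∑ w ∈ c.support, ∑ i ∈ Finset.range K, if w.length = i then |c w| * C else 0 :=
        Finset.sum_comm
    _ ≤ ∑ w ∈ c.support, |c w| * C := by
        refine Finset.sum_le_sum fun w _ => ?_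
        rw [Finset.sum_ite_eq (Finset.range K) w.length (fun _ => |c w| * C)]
        split
        · exact le_refl _
        · positivity
    _ = normT c * C := by rw [normT, Finset.sum_mul]
lemma tilde_apply_ne {d : ℕ} (l : Word d →₀ ℝ) (w : Word d) (hw : w ≠ []) :
    tilde l w = l w := by
  rw [tilde, Finsupp.sub_apply, Finsupp.single_apply, if_neg (fun h => hw h.symm), sub_zero]

lemma normT_nonneg {d : ℕ} (l : Word d →₀ ℝ) : 0 ≤ normT l :=
  Finset.sum_nonneg fun w _ => abs_nonneg _

lemma normT_tilde_le {d : ℕ} (l : Word d →₀ ℝ) : normT (tilde l) ≤ normT l := by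
  unfold normT
  have hsub : (tilde l).support ⊆ l.support := by
    intro w hw
    have hw' := Finsupp.mem_support_iff.1 hw
    have hne : w ≠ [] := by
      rintro rfl; simp [tilde] at hw'
    rw [tilde_apply_ne l w hne] at hw'
    exact Finsupp.mem_support_iff.2 hw'
  calc ∑ w ∈ (tilde l).support, |tilde l w|
      = ∑ w ∈ (tilde l).support, |l w| := by
        refine Finset.sum_congr rfl fun w hw => ?_
        have hne : w ≠ [] := by
          rintro rfl
          have := Finsupp.mem_support_iff.1 hw
          simp [tilde] at this
        rw [tilde_apply_ne l w hne]
    _ ≤ ∑ w ∈ l.support, |l w| :=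
        Finset.sum_le_sum_of_subset_of_nonneg hsub fun w _ _ => abs_nonneg _

lemma pairing_decomp {d : ℕ} (l : Word d →₀ ℝ) {g : Word d → ℝ} (hg : IsGroupLike g) :
    pairing l g = l [] + pairing (tilde l) g := by
  have hl : l = Finsupp.single [] (l []) + tilde l := by
    rw [tilde, add_sub_cancel]
  conv_lhs => rw [hl]
  rw [pairing_add, pairing_single, groupLike_empty hg, mul_one]

lemma abs_pairing_le {d : ℕ} (c : Word d →₀ ℝ) (g : Word d → ℝ) (C : ℝ)
    (hC : ∀ w, c w ≠ 0 → |g w| ≤ C) : |pairing c g| ≤ normT c * C := by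
  unfold pairing normT
  rw [Finsupp.sum, Finset.sum_mul]
  refine (Finset.abs_sum_le_sum_abs _ _).trans (Finset.sum_le_sum fun w hw => ?_)
  rw [abs_mul]
  exact mul_le_mul_of_nonneg_left (hC w (Finsupp.mem_support_iff.1 hw)) (abs_nonneg _)

lemma pairing_shufflePow {d : ℕ} (c : Word d →₀ ℝ) {g : Word d → ℝ} (hg : IsGroupLike g)
    (r : ℕ) : pairing (shufflePow c r) g = (pairing c g) ^ r := by
  induction r with
  | zero => rw [shufflePow, pairing_single, groupLike_empty hg, pow_zero, mul_one]
  | succ r ih => rw [shufflePow, hg.2, ih, pow_succ]; ring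

lemma Sdeg_eq_zero {d : ℕ} (g : Word d → ℝ) (c : Word d →₀ ℝ) (n : ℕ)
    (h : ∀ w, c w ≠ 0 → w.length ≠ n) : Sdeg g c n = 0 := by
  unfold Sdeg
  apply Finset.sum_eq_zero
  intro w hw
  simp only []
  rw [if_neg (h w (Finsupp.mem_support_iff.1 hw))]

lemma sum_Sdeg_eq_pairing {d : ℕ} (g : Word d → ℝ) (c : Word d →₀ ℝ) (K : ℕ)
    (h : ∀ w, c w ≠ 0 → w.length < K) :
    ∑ n ∈ Finset.range K, Sdeg g c n = pairing c g := by
  rw [sum_Sdeg]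
  unfold pairing
  rw [Finsupp.sum]
  refine Finset.sum_congr rfl fun w hw => ?_
  rw [if_pos (h w (Finsupp.mem_support_iff.1 hw))]

lemma tri_le (K : ℕ) (F G : ℕ → ℝ) (hF : ∀ i, 0 ≤ F i) (hG : ∀ j, 0 ≤ G j) :
    ∑ n ∈ Finset.range K, ∑ i ∈ Finset.range (n+1), F i * G (n - i) ≤
      (∑ i ∈ Finset.range K, F i) * (∑ j ∈ Finset.range K, G j) := by
  rw [Finset.sum_mul_sum]
  calc ∑ n ∈ Finset.range K, ∑ i ∈ Finset.range (n+1), F i * G (n - i)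
      = ∑ n ∈ Finset.range K, ∑ i ∈ Finset.range K,
          (if i ≤ n then F i * G (n - i) else 0) := by
        refine Finset.sum_congr rfl fun n hn => ?_
        rw [Finset.mem_range] at hn
        have e1 : ∑ i ∈ Finset.range (n+1), F i * G (n - i)
            = ∑ i ∈ Finset.range (n+1), (if i ≤ n then F i * G (n - i) else 0) :=
          Finset.sum_congr rfl fun i hi =>
            (if_pos (by rw [Finset.mem_range] at hi; omega)).symm
        rw [e1]
        exact Finset.sum_subset (Finset.range_subset_range.2 (by omega))
          (fun i _ hi => if_neg (by rw [Finset.mem_range] at hi; omega))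
    _ = ∑ i ∈ Finset.range K, ∑ n ∈ Finset.range K,
          (if i ≤ n then F i * G (n - i) else 0) := Finset.sum_comm
    _ ≤ ∑ i ∈ Finset.range K, ∑ j ∈ Finset.range K, F i * G j := by
        refine Finset.sum_le_sum fun i hi => ?_
        rw [Finset.mem_range] at hi
        have h1 : ∑ n ∈ Finset.range K, (if i ≤ n then F i * G (n - i) else 0)
            = ∑ n ∈ Finset.Ico i K, F i * G (n - i) := by
          rw [Finset.range_eq_Ico, ← Finset.sum_Ico_consecutive _ (Nat.zero_le i) (le_of_lt hi)]
          have z1 : ∑ n ∈ Finset.Ico 0 i, (if i ≤ n then F i * G (n - i) else 0) = 0 :=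
            Finset.sum_eq_zero fun n hn =>
              if_neg (by rw [Finset.mem_Ico] at hn; omega)
          have z2 : ∑ n ∈ Finset.Ico i K, (if i ≤ n then F i * G (n - i) else 0)
              = ∑ n ∈ Finset.Ico i K, F i * G (n - i) :=
            Finset.sum_congr rfl fun n hn =>
              if_pos (by rw [Finset.mem_Ico] at hn; omega)
          rw [z1, z2, zero_add]
        rw [h1, Finset.sum_Ico_eq_sum_range]
        have h2 : ∀ j, F i * G (i + j - i) = F i * G j := by
          intro j; rw [Nat.add_sub_cancel_left]
        rw [Finset.sum_congr rfl fun j _ => h2 j]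
        refine Finset.sum_le_sum_of_subset_of_nonneg (Finset.range_subset_range.2 (by omega)) ?_
        intro j _ _
        exact mul_nonneg (hF i) (hG j)
lemma Sdeg_single {d : ℕ} (g : Word d → ℝ) (w : Word d) (c : ℝ) (n : ℕ) :
    Sdeg g (Finsupp.single w c) n = if w.length = n then c * g w else 0 := by
  unfold Sdeg
  rw [Finsupp.sum_single_index]
  split <;> simp

lemma q_bound {d : ℕ} (l : Word d →₀ ℝ) {g : Word d → ℝ} (hg : IsGroupLike g) (r K : ℕ) :
    ∑ n ∈ Finset.range K, |Sdeg g (shufflePow (tilde l) r) n| ≤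
      (normT l * normTrunc g (degT l)) ^ r := by
  have hC0 : 0 ≤ normTrunc g (degT l) := normTrunc_nonneg g (degT l)
  have hx0 : 0 ≤ normT l * normTrunc g (degT l) := mul_nonneg (normT_nonneg l) hC0
  induction r generalizing K with
  | zero =>
      rw [pow_zero, shufflePow]
      have : ∀ n, |Sdeg g (Finsupp.single ([] : Word d) (1:ℝ)) n| = if n = 0 then 1 else 0 := by
        intro n
        rw [Sdeg_single]
        simp only [List.length_nil, one_mul, groupLike_empty hg]
        by_cases h : n = 0 <;> simp [h, eq_comm]
      rw [Finset.sum_congr rfl fun n _ => this n, Finset.sum_ite_eq' (Finset.range K) 0 (fun _ => (1:ℝ))]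
      split <;> norm_num
  | succ r ih =>
      rw [shufflePow, pow_succ]
      have hterm : ∀ n, |Sdeg g (shuffle (tilde l) (shufflePow (tilde l) r)) n| ≤
          ∑ i ∈ Finset.range (n+1),
            |Sdeg g (tilde l) i| * |Sdeg g (shufflePow (tilde l) r) (n - i)| := by
        intro n
        rw [Sdeg_shuffle hg]
        refine (Finset.abs_sum_le_sum_abs _ _).trans ?_
        refine Finset.sum_le_sum fun i _ => ?_
        rw [abs_mul]
      calc ∑ n ∈ Finset.range K, |Sdeg g (shuffle (tilde l) (shufflePow (tilde l) r)) n|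
          ≤ ∑ n ∈ Finset.range K, ∑ i ∈ Finset.range (n+1),
              |Sdeg g (tilde l) i| * |Sdeg g (shufflePow (tilde l) r) (n - i)| :=
            Finset.sum_le_sum fun n _ => hterm n
        _ ≤ (∑ i ∈ Finset.range K, |Sdeg g (tilde l) i|) *
            (∑ j ∈ Finset.range K, |Sdeg g (shufflePow (tilde l) r) j|) :=
            tri_le K _ _ (fun i => abs_nonneg _) (fun j => abs_nonneg _)
        _ ≤ (normT l * normTrunc g (degT l)) * (normT l * normTrunc g (degT l)) ^ r := by
            refine mul_le_mul ?_ (ih K) (Finset.sum_nonneg fun j _ => abs_nonneg _) hx0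
            refine (sum_abs_Sdeg_le g (tilde l) (normTrunc g (degT l)) hC0 ?_ K).trans ?_
            · intro w hw
              exact abs_le_normTrunc g (degT l) w (support_tilde l w hw).2
            · exact mul_le_mul_of_nonneg_right (normT_tilde_le l) hC0
        _ = (normT l * normTrunc g (degT l)) ^ r * (normT l * normTrunc g (degT l)) := by ring
lemma pairTrunc_expShuffle {d : ℕ} (l : Word d →₀ ℝ) (g : Word d → ℝ) (N : ℕ) :
    pairTrunc (expShuffle l) N g = Real.exp (l []) *
      ∑ r ∈ Finset.range (N+1), ((r.factorial : ℝ))⁻¹ *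
        ∑ n ∈ Finset.range (N+1), Sdeg g (shufflePow (tilde l) r) n := by
  classical
  set F := (Finset.range (N+1)).biUnion (fun r => (shufflePow (tilde l) r).support) with hF
  have h0 : ∀ w ∉ F, (if w.length ≤ N then expShuffle l w * g w else 0) = 0 := by
    intro w hw
    split_ifs with h
    · have hc : ∀ r, r ≤ N → shufflePow (tilde l) r w = 0 := by
        intro r hr
        by_contra hc
        exact hw (Finset.mem_biUnion.2 ⟨r, Finset.mem_range.2 (by omega),
          Finsupp.mem_support_iff.2 hc⟩)
      have : expShuffle l w = 0 := by
        unfold expShuffle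
        rw [Finset.sum_eq_zero, mul_zero]
        intro r hr
        rw [Finset.mem_range] at hr
        rw [hc r (by omega), mul_zero]
      rw [this, zero_mul]
    · rfl
  rw [pairTrunc, tsum_eq_sum h0]
  have hsplit : ∀ w ∈ F, (if w.length ≤ N then expShuffle l w * g w else 0) =
      ∑ r ∈ Finset.range (N+1), Real.exp (l []) * (((r.factorial : ℝ))⁻¹ *
        (if w.length ≤ N then shufflePow (tilde l) r w * g w else 0)) := by
    intro w _
    by_cases h : w.length ≤ N
    · simp only [if_pos h]
      unfold expShuffle
      have hext : ∑ r ∈ Finset.range (w.length+1), ((r.factorial : ℝ))⁻¹ * shufflePow (tilde l) r w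
          = ∑ r ∈ Finset.range (N+1), ((r.factorial : ℝ))⁻¹ * shufflePow (tilde l) r w := by
        refine Finset.sum_subset (Finset.range_subset_range.2 (by omega)) ?_
        intro r _ hr
        rw [Finset.mem_range] at hr
        have : shufflePow (tilde l) r w = 0 := by
          by_contra hc
          have := (support_shufflePow l r w hc).1
          omega
        rw [this, mul_zero]
      rw [hext, Finset.mul_sum, Finset.sum_mul]
      refine Finset.sum_congr rfl fun r _ => ?_
      ring
    · simp only [if_neg h]
      rw [Finset.sum_eq_zero]
      intro r _
      rw [mul_zero, mul_zero]
  rw [Finset.sum_congr rfl hsplit, Finset.sum_comm, Finset.mul_sum]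
  refine Finset.sum_congr rfl fun r hr => ?_
  rw [← Finset.mul_sum, ← Finset.mul_sum]
  congr 1
  congr 1
  have hsupp : (shufflePow (tilde l) r).support ⊆ F :=
    fun w hw => Finset.mem_biUnion.2 ⟨r, hr, hw⟩
  rw [sum_Sdeg]
  rw [← Finset.sum_subset hsupp]
  · refine Finset.sum_congr rfl fun w _ => ?_
    simp [Nat.lt_succ_iff]
  · intro w _ hw
    rw [Finsupp.notMem_support_iff.1 hw]
    split <;> simp
lemma summable_tail (x : ℝ) (m : ℕ) :
    Summable (fun k : ℕ => x ^ (k + m) / ((k + m).factorial : ℝ)) :=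
  (Real.summable_pow_div_factorial x).comp_injective (add_left_injective m)

lemma tail_sum_le (x : ℝ) (hx0 : 0 ≤ x) (m : ℕ) (hx : 2 * x ≤ (m : ℝ) + 2) :
    ∑' k : ℕ, x ^ (k + (m+1)) / ((k + (m+1)).factorial : ℝ) ≤
      2 * (x ^ (m+1) / (((m+1).factorial : ℝ))) := by
  have hterm : ∀ k : ℕ, x ^ (k + (m+1)) / ((k + (m+1)).factorial : ℝ) ≤
      (x ^ (m+1) / (((m+1).factorial : ℝ))) * (1/2) ^ k := by
    intro k
    have hfact : ((m+1).factorial : ℝ) * ((m:ℝ)+2) ^ k ≤ ((k + (m+1)).factorial : ℝ) := by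
      have h := Nat.factorial_mul_pow_le_factorial (m := m+1) (n := k)
      have : ((m+1).factorial * (m+2)^k : ℕ) ≤ ((m+1+k).factorial : ℕ) := by
        convert h using 2 <;> omega
      calc ((m+1).factorial : ℝ) * ((m:ℝ)+2) ^ k
          = (((m+1).factorial * (m+2)^k : ℕ) : ℝ) := by push_cast; ring
        _ ≤ (((m+1+k).factorial : ℕ) : ℝ) := by exact_mod_cast this
        _ = ((k + (m+1)).factorial : ℝ) := by rw [show m+1+k = k+(m+1) by omega]
    have hm2 : (0:ℝ) < (m:ℝ) + 2 := by positivity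
    have hfac1 : (0:ℝ) < ((m+1).factorial : ℝ) := by positivity
    calc x ^ (k + (m+1)) / ((k + (m+1)).factorial : ℝ)
        ≤ x ^ (k + (m+1)) / (((m+1).factorial : ℝ) * ((m:ℝ)+2) ^ k) := by
          apply div_le_div_of_nonneg_left (by positivity) (by positivity) hfact
        _ = (x ^ (m+1) / (((m+1).factorial : ℝ))) * (x / ((m:ℝ)+2)) ^ k := by
          rw [pow_add, div_pow]
          field_simp
        _ ≤ (x ^ (m+1) / (((m+1).factorial : ℝ))) * (1/2) ^ k := by
          apply mul_le_mul_of_nonneg_left _ (by positivity)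
          apply pow_le_pow_left₀ (by positivity)
          rw [div_le_div_iff₀ hm2 (by norm_num)]
          linarith
  have hs1 : Summable (fun k : ℕ => x ^ (k + (m+1)) / ((k + (m+1)).factorial : ℝ)) :=
    summable_tail x (m+1)
  have hs2 : Summable (fun k : ℕ => (x ^ (m+1) / (((m+1).factorial : ℝ))) * (1/2) ^ k) :=
    (summable_geometric_of_lt_one (by norm_num) (by norm_num)).mul_left _
  calc ∑' k : ℕ, x ^ (k + (m+1)) / ((k + (m+1)).factorial : ℝ)
      ≤ ∑' k : ℕ, (x ^ (m+1) / (((m+1).factorial : ℝ))) * (1/2) ^ k :=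
        Summable.tsum_le_tsum hterm hs1 hs2
    _ = (x ^ (m+1) / (((m+1).factorial : ℝ))) * ∑' k : ℕ, ((1:ℝ)/2) ^ k := tsum_mul_left
    _ = 2 * (x ^ (m+1) / (((m+1).factorial : ℝ))) := by
        rw [tsum_geometric_of_lt_one (by norm_num) (by norm_num)]
        ring
lemma tilde_eq_zero_of_deg_zero {d : ℕ} (l : Word d →₀ ℝ) (hD : degT l = 0) :
    tilde l = 0 := by
  ext w
  rcases eq_or_ne w [] with rfl | hw
  · simp [tilde]
  · rw [tilde_apply_ne l w hw, Finsupp.coe_zero, Pi.zero_apply]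
    by_contra h
    have h1 : w ∈ l.support := Finsupp.mem_support_iff.2 h
    have h2 := Finset.le_sup (f := List.length) h1
    rw [degT] at hD
    rw [hD, Nat.le_zero, List.length_eq_zero_iff] at h2
    exact hw h2

lemma shufflePow_zero_succ {d : ℕ} (r : ℕ) :
    shufflePow (0 : Word d →₀ ℝ) (r+1) = 0 := by
  rw [shufflePow, shuffle, Finsupp.sum_zero_index]

lemma expShuffle_deg_zero {d : ℕ} (l : Word d →₀ ℝ) (hD : degT l = 0) (w : Word d) :
    expShuffle l w = if w = [] then Real.exp (l []) else 0 := by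
  unfold expShuffle
  rw [tilde_eq_zero_of_deg_zero l hD]
  rcases eq_or_ne w [] with rfl | hw
  · simp [shufflePow]
  · rw [if_neg hw, Finset.sum_eq_zero, mul_zero]
    intro r hr
    cases r with
    | zero =>
        rw [shufflePow, Finsupp.single_apply, if_neg (fun h => hw h.symm), mul_zero]
    | succ r => rw [shufflePow_zero_succ]; simp

/-- quantitative approximation of `exp(⟨l, g⟩)` by
`⟨exp^⧢(l), π_{≤N}(g)⟩` for group-like `g`. -/
theorem statement3 {d : ℕ} (l : Word d →₀ ℝ) (g : Word d → ℝ) (hg : IsGroupLike g)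
    (N : ℕ) (hN : (N : ℝ) > 2 * (degT l : ℝ) * normT l * normTrunc g (degT l)) :
    |Real.exp (pairing l g) - pairTrunc (expShuffle l) N g| ≤
      4 * Real.exp (l []) *
        (normT l * normTrunc g (degT l)) ^ (N / degT l + 1) /
          (Nat.factorial (N / degT l + 1)) := by
  have hC0 : 0 ≤ normTrunc g (degT l) := normTrunc_nonneg g (degT l)
  have hx0 : 0 ≤ normT l * normTrunc g (degT l) := mul_nonneg (normT_nonneg l) hC0
  by_cases hD : degT l = 0
  · have h1 : pairTrunc (expShuffle l) N g = Real.exp (l []) := by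
      unfold pairTrunc
      have h0 : ∀ w : Word d, w ∉ ({([] : Word d)} : Finset (Word d)) →
          (if List.length w ≤ N then expShuffle l w * g w else 0) = 0 := by
        intro w hw
        rw [Finset.mem_singleton] at hw
        rw [expShuffle_deg_zero l hD, if_neg hw]
        split <;> simp
      rw [tsum_eq_sum h0, Finset.sum_singleton,
        expShuffle_deg_zero l hD, if_pos rfl, if_pos (by simp), groupLike_empty hg, mul_one]
    have h2 : pairing l g = l [] := by
      rw [pairing_decomp l hg, tilde_eq_zero_of_deg_zero l hD,
        show pairing (0 : Word d →₀ ℝ) g = 0 from Finsupp.sum_zero_index, add_zero]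
    rw [h1, h2, sub_self, abs_zero]
    positivity
  · have hD1 : 0 < degT l := Nat.pos_of_ne_zero hD
    set x : ℝ := normT l * normTrunc g (degT l) with hxdef
    have hMN : N / degT l ≤ N := Nat.div_le_self N (degT l)
    have hNlt : N < (N / degT l + 1) * degT l := by
      have h1 : degT l * (N / degT l) + N % degT l = N := Nat.div_add_mod N (degT l)
      have h2 := Nat.mod_lt N hD1
      have h3 : (N / degT l + 1) * degT l = degT l * (N / degT l) + degT l := by ring
      omega
    have h2x : 2 * x ≤ ((N / degT l : ℕ) : ℝ) + 2 := by
      have hDr : (0:ℝ) < ((degT l : ℕ) : ℝ) := by exact_mod_cast hD1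
      have hNR : (N : ℝ) < (((N / degT l : ℕ) : ℝ) + 1) * ((degT l : ℕ) : ℝ) := by
        exact_mod_cast hNlt
      have hhh : 2 * ((degT l : ℕ) : ℝ) * x < (((N / degT l : ℕ) : ℝ) + 1) * ((degT l : ℕ) : ℝ) := by
        calc 2 * ((degT l : ℕ) : ℝ) * x
            = 2 * (degT l : ℝ) * normT l * normTrunc g (degT l) := by rw [hxdef]; ring
          _ < N := hN
          _ < (((N / degT l : ℕ) : ℝ) + 1) * ((degT l : ℕ) : ℝ) := hNR
      nlinarith
    set t : ℝ := pairing (tilde l) g with htdef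
    have ht : |t| ≤ x := by
      refine (abs_pairing_le (tilde l) g (normTrunc g (degT l)) ?_).trans ?_
      · intro w hw; exact abs_le_normTrunc g (degT l) w (support_tilde l w hw).2
      · exact mul_le_mul_of_nonneg_right (normT_tilde_le l) hC0
    have hTr_eq : ∀ r, r ≤ N / degT l →
        ∑ n ∈ Finset.range (N+1), Sdeg g (shufflePow (tilde l) r) n = t ^ r := by
      intro r hr
      rw [sum_Sdeg_eq_pairing, pairing_shufflePow _ hg]
      intro w hw
      have h1 := (support_shufflePow l r w hw).2
      have h2 : r * degT l ≤ (N / degT l) * degT l := Nat.mul_le_mul_right (degT l) hr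
      have h3 : (N / degT l) * degT l ≤ N := Nat.div_mul_le_self N (degT l)
      omega
    have hTr_le : ∀ r, |∑ n ∈ Finset.range (N+1), Sdeg g (shufflePow (tilde l) r) n| ≤ x ^ r :=
      fun r => (Finset.abs_sum_le_sum_abs _ _).trans (q_bound l hg r (N+1))
    have hexp : Real.exp (pairing l g) = Real.exp (l []) * Real.exp t := by
      rw [pairing_decomp l hg, Real.exp_add]
    have hexpt : Real.exp t = ∑' r : ℕ, t ^ r / (r.factorial : ℝ) := by
      rw [Real.exp_eq_exp_ℝ, NormedSpace.exp_eq_tsum_div]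
    rw [hexp, pairTrunc_expShuffle, ← mul_sub, abs_mul, abs_of_pos (Real.exp_pos _)]
    have key : |Real.exp t - ∑ r ∈ Finset.range (N+1), ((r.factorial : ℝ))⁻¹ *
        ∑ n ∈ Finset.range (N+1), Sdeg g (shufflePow (tilde l) r) n| ≤
        4 * (x ^ (N / degT l + 1) / (((N / degT l + 1).factorial : ℝ))) := by
      set m := N / degT l with hm
      have hsumt : Summable (fun r : ℕ => t ^ r / (r.factorial : ℝ)) :=
        Real.summable_pow_div_factorial t
      have hsplit := Summable.sum_add_tsum_nat_add (f := fun r : ℕ => t ^ r / (r.factorial : ℝ))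
        (N+1) hsumt
      rw [hexpt, ← hsplit, add_sub_right_comm, ← Finset.sum_sub_distrib]
      have habs1 : ∀ k : ℕ, |t ^ (k + (N+1)) / (((k + (N+1)).factorial : ℕ) : ℝ)| =
          |t| ^ (k + (N+1)) / (((k + (N+1)).factorial : ℕ) : ℝ) := by
        intro k
        rw [abs_div, abs_pow, Nat.abs_cast]
      have hsumabs : Summable (fun k : ℕ => |t| ^ (k + (N+1)) / (((k + (N+1)).factorial : ℕ) : ℝ)) :=
        summable_tail |t| (N+1)
      have htail1 : |∑' k : ℕ, t ^ (k + (N+1)) / (((k + (N+1)).factorial : ℕ) : ℝ)| ≤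
          ∑' k : ℕ, |t| ^ (k + (N+1)) / (((k + (N+1)).factorial : ℕ) : ℝ) := by
        have := norm_tsum_le_tsum_norm (f := fun k : ℕ =>
          t ^ (k + (N+1)) / (((k + (N+1)).factorial : ℕ) : ℝ)) (by simpa [Real.norm_eq_abs, habs1] using hsumabs)
        simpa [Real.norm_eq_abs, habs1] using this
      have htail2 : ∑' k : ℕ, |t| ^ (k + (N+1)) / (((k + (N+1)).factorial : ℕ) : ℝ) ≤
          ∑' k : ℕ, x ^ (k + (N+1)) / (((k + (N+1)).factorial : ℕ) : ℝ) := by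
        refine Summable.tsum_le_tsum (fun k => ?_) hsumabs (summable_tail x (N+1))
        apply div_le_div_of_nonneg_right ?_ (by positivity)
        · exact pow_le_pow_left₀ (abs_nonneg t) ht _
      have hmain : |∑ r ∈ Finset.range (N+1), (t ^ r / (r.factorial : ℝ) - ((r.factorial : ℝ))⁻¹ *
          ∑ n ∈ Finset.range (N+1), Sdeg g (shufflePow (tilde l) r) n)| ≤
          2 * ∑ k ∈ Finset.range (N - m), x ^ (k + (m+1)) / (((k + (m+1)).factorial : ℕ) : ℝ) := by
        refine (Finset.abs_sum_le_sum_abs _ _).trans ?_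
        have hterm : ∀ r ∈ Finset.range (N+1),
            |t ^ r / (r.factorial : ℝ) - ((r.factorial : ℝ))⁻¹ *
              ∑ n ∈ Finset.range (N+1), Sdeg g (shufflePow (tilde l) r) n| ≤
            (if r ≤ m then 0 else 2 * (x ^ r / (r.factorial : ℝ))) := by
          intro r _
          split_ifs with hr
          · rw [hTr_eq r hr, div_eq_mul_inv, mul_comm, sub_self, abs_zero]
          · refine (abs_sub _ _).trans ?_
            have e1 : |t ^ r / (r.factorial : ℝ)| ≤ x ^ r / (r.factorial : ℝ) := by
              rw [abs_div, abs_pow, Nat.abs_cast]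
              apply div_le_div_of_nonneg_right (pow_le_pow_left₀ (abs_nonneg t) ht r) (by positivity)
            have e2 : |((r.factorial : ℝ))⁻¹ *
                ∑ n ∈ Finset.range (N+1), Sdeg g (shufflePow (tilde l) r) n| ≤
                x ^ r / (r.factorial : ℝ) := by
              rw [abs_mul, abs_inv, Nat.abs_cast, div_eq_inv_mul]
              exact mul_le_mul_of_nonneg_left (hTr_le r) (by positivity)
            linarith
        refine (Finset.sum_le_sum hterm).trans ?_
        have hsplit2 : Finset.range (N+1) = Finset.Ico 0 (m+1) ∪ Finset.Ico (m+1) (N+1) := by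
          rw [Finset.range_eq_Ico, Finset.Ico_union_Ico_eq_Ico (Nat.zero_le _) (by omega)]
        rw [hsplit2, Finset.sum_union (Finset.Ico_disjoint_Ico_consecutive 0 (m+1) (N+1))]
        have z1 : ∑ r ∈ Finset.Ico 0 (m+1), (if r ≤ m then (0:ℝ) else 2 * (x ^ r / (r.factorial : ℝ))) = 0 :=
          Finset.sum_eq_zero fun r hr => if_pos (by rw [Finset.mem_Ico] at hr; omega)
        have z2 : ∑ r ∈ Finset.Ico (m+1) (N+1), (if r ≤ m then (0:ℝ) else 2 * (x ^ r / (r.factorial : ℝ))) =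
            ∑ r ∈ Finset.Ico (m+1) (N+1), 2 * (x ^ r / (r.factorial : ℝ)) :=
          Finset.sum_congr rfl fun r hr => if_neg (by rw [Finset.mem_Ico] at hr; omega)
        rw [z1, z2, zero_add, Finset.sum_Ico_eq_sum_range, Finset.mul_sum]
        have : N + 1 - (m + 1) = N - m := by omega
        rw [this]
        refine le_of_eq (Finset.sum_congr rfl fun k _ => ?_)
        rw [Nat.add_comm (m+1) k]
      have hjoin : (∑ k ∈ Finset.range (N - m), x ^ (k + (m+1)) / (((k + (m+1)).factorial : ℕ) : ℝ)) +
          ∑' k : ℕ, x ^ (k + (N+1)) / (((k + (N+1)).factorial : ℕ) : ℝ) =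
          ∑' k : ℕ, x ^ (k + (m+1)) / (((k + (m+1)).factorial : ℕ) : ℝ) := by
        have h := Summable.sum_add_tsum_nat_add (f := fun k : ℕ => x ^ (k + (m+1)) / (((k + (m+1)).factorial : ℕ) : ℝ))
          (N - m) (summable_tail x (m+1))
        rw [← h]
        congr 1
        refine tsum_congr fun k => ?_
        show x ^ (k + (N+1)) / (((k + (N+1)).factorial : ℕ) : ℝ) =
          x ^ (k + (N - m) + (m+1)) / (((k + (N - m) + (m+1)).factorial : ℕ) : ℝ)
        rw [show k + (N - m) + (m+1) = k + (N+1) from by omega]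
      have htailpos : (0:ℝ) ≤ ∑' k : ℕ, x ^ (k + (N+1)) / (((k + (N+1)).factorial : ℕ) : ℝ) :=
        tsum_nonneg fun k => by positivity
      have hfinal := tail_sum_le x hx0 m h2x
      calc |(∑ r ∈ Finset.range (N+1), (t ^ r / (r.factorial : ℝ) - ((r.factorial : ℝ))⁻¹ *
            ∑ n ∈ Finset.range (N+1), Sdeg g (shufflePow (tilde l) r) n)) +
            ∑' k : ℕ, t ^ (k + (N+1)) / (((k + (N+1)).factorial : ℕ) : ℝ)|
          ≤ |∑ r ∈ Finset.range (N+1), (t ^ r / (r.factorial : ℝ) - ((r.factorial : ℝ))⁻¹ *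
            ∑ n ∈ Finset.range (N+1), Sdeg g (shufflePow (tilde l) r) n)| +
            |∑' k : ℕ, t ^ (k + (N+1)) / (((k + (N+1)).factorial : ℕ) : ℝ)| := abs_add_le _ _
        _ ≤ 2 * (∑ k ∈ Finset.range (N - m), x ^ (k + (m+1)) / (((k + (m+1)).factorial : ℕ) : ℝ)) +
            2 * ∑' k : ℕ, x ^ (k + (N+1)) / (((k + (N+1)).factorial : ℕ) : ℝ) := by
            have := htail1.trans htail2
            linarith
        _ = 2 * ∑' k : ℕ, x ^ (k + (m+1)) / (((k + (m+1)).factorial : ℕ) : ℝ) := by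
            rw [← hjoin]; ring
        _ ≤ 2 * (2 * (x ^ (m+1) / (((m+1).factorial : ℕ) : ℝ))) := by linarith
        _ = 4 * (x ^ (m+1) / (((m+1).factorial : ℕ) : ℝ)) := by ring
    calc Real.exp (l []) * |Real.exp t - ∑ r ∈ Finset.range (N+1), ((r.factorial : ℝ))⁻¹ *
          ∑ n ∈ Finset.range (N+1), Sdeg g (shufflePow (tilde l) r) n|
        ≤ Real.exp (l []) * (4 * (x ^ (N / degT l + 1) / (((N / degT l + 1).factorial : ℝ)))) :=
          mul_le_mul_of_nonneg_left key (le_of_lt (Real.exp_pos _))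
      _ = 4 * Real.exp (l []) * x ^ (N / degT l + 1) / (((N / degT l + 1).factorial : ℝ)) := by ring


end
end

section
/- Let Z be a nonnegative random variable with cumulative distribution function F_Z, independent of a σ-field G, and let A : [0,T] → [0,∞) be a G-measurable nondecreasing continuous process with A(0) = 0. Define τ := inf{t ≥ 0 : A(t∧T) ≥ Z} (with inf∅ = ∞). Then for any bounded continuous adapted process Y and deterministic time S ∈ [0,T], E[Y_{τ∧S} | G] = ∫₀^S Y_t dF̃(t) + Y_S (1 − F̃(S)), where F̃(t) := F_Z(A(t)). -/
open MeasureTheory ProbabilityTheory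
open scoped Classical

section AuxStatement7

open Set

/-- The hitting set is closed, nonempty, bdd below; its inf belongs to it. -/
private lemma s7_tau_mem {T : ℝ} (hT : 0 < T) {A : ℝ → ℝ} (hmono : Monotone A)
    (hcont : Continuous A) {z : ℝ} (hz : z ≤ A T) :
    sInf {t | 0 ≤ t ∧ z ≤ A (min t T)} ∈ {t | 0 ≤ t ∧ z ≤ A (min t T)} := by
  have hTmem : T ∈ {t | 0 ≤ t ∧ z ≤ A (min t T)} := ⟨hT.le, by rwa [min_self]⟩
  have hclosed : IsClosed {t | 0 ≤ t ∧ z ≤ A (min t T)} := by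
    have heq : {t | 0 ≤ t ∧ z ≤ A (min t T)}
        = Ici 0 ∩ (fun t => A (min t T)) ⁻¹' Ici z := rfl
    rw [heq]
    exact isClosed_Ici.inter
      (IsClosed.preimage (hcont.comp (continuous_id.min continuous_const)) isClosed_Ici)
  exact hclosed.csInf_mem ⟨T, hTmem⟩ ⟨0, fun t ht => ht.1⟩

private lemma s7_tau_le_iff {T : ℝ} (hT : 0 < T) {A : ℝ → ℝ} (hmono : Monotone A)
    (hcont : Continuous A) {z : ℝ} (hz : z ≤ A T) (c : ℝ) :
    sInf {t | 0 ≤ t ∧ z ≤ A (min t T)} ≤ c ↔ 0 ≤ c ∧ z ≤ A (min c T) := by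
  constructor
  · intro h
    obtain ⟨h0, hzA⟩ := s7_tau_mem hT hmono hcont hz
    exact ⟨h0.trans h, hzA.trans (hmono (min_le_min h le_rfl))⟩
  · intro h
    exact csInf_le ⟨0, fun t ht => ht.1⟩ h

private lemma s7_tau_empty {T : ℝ} {A : ℝ → ℝ} (hmono : Monotone A) {z : ℝ} (hz : A T < z) :
    {t | 0 ≤ t ∧ z ≤ A (min t T)} = (∅ : Set ℝ) := by
  ext t
  simp only [Set.mem_setOf_eq, Set.mem_empty_iff_false, iff_false, not_and, not_le]
  intro _
  exact lt_of_le_of_lt (hmono (min_le_right t T)) hz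

private lemma s7_tau_nonneg {T : ℝ} (A : ℝ → ℝ) (z : ℝ) :
    0 ≤ sInf {t | 0 ≤ t ∧ z ≤ A (min t T)} :=
  Real.sInf_nonneg fun t ht => ht.1

/-- Joint measurability of the hitting time. -/
private lemma s7_tau_meas {Ω' : Type*} [mΩ' : MeasurableSpace Ω'] {T : ℝ} (hT : 0 < T)
    {A : Ω' → ℝ → ℝ} (hAmono : ∀ ω, Monotone (A ω)) (hAcont : ∀ ω, Continuous (A ω))
    (hAmeas : ∀ t, Measurable fun ω => A ω t) :
    Measurable fun p : Ω' × ℝ => sInf {t | 0 ≤ t ∧ p.2 ≤ A p.1 (min t T)} := by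
  apply measurable_of_Iic
  intro c
  rcases lt_or_ge c 0 with hc | hc
  · convert MeasurableSet.empty
    ext p
    simp only [Set.mem_preimage, Set.mem_Iic, Set.mem_empty_iff_false, iff_false, not_le]
    exact lt_of_lt_of_le hc (s7_tau_nonneg _ _)
  · have heq : (fun p : Ω' × ℝ => sInf {t | 0 ≤ t ∧ p.2 ≤ A p.1 (min t T)}) ⁻¹' Set.Iic c
        = {p : Ω' × ℝ | p.2 ≤ A p.1 (min c T)} ∪ {p : Ω' × ℝ | A p.1 T < p.2} := by
      ext p
      simp only [Set.mem_preimage, Set.mem_Iic, Set.mem_union, Set.mem_setOf_eq]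
      rcases le_or_gt p.2 (A p.1 T) with hz | hz
      · rw [s7_tau_le_iff hT (hAmono _) (hAcont _) hz c]
        constructor
        · rintro ⟨_, h⟩; exact Or.inl h
        · rintro (h | h)
          · exact ⟨hc, h⟩
          · exact absurd hz (not_le.2 h)
      · constructor
        · intro _; exact Or.inr hz
        · intro _
          rw [s7_tau_empty (hAmono _) hz, Real.sInf_empty]
          exact hc
    rw [heq]
    exact MeasurableSet.union
      (measurableSet_le measurable_snd ((hAmeas (min c T)).comp measurable_fst))
      (measurableSet_lt ((hAmeas T).comp measurable_fst) measurable_snd)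

/-- Joint strong measurability of the integrand. -/
private lemma s7_G_meas {Ω' : Type*} [mΩ' : MeasurableSpace Ω'] {T : ℝ} (hT : 0 < T) (S : ℝ)
    {A : Ω' → ℝ → ℝ} (hAmono : ∀ ω, Monotone (A ω)) (hAcont : ∀ ω, Continuous (A ω))
    (hAmeas : ∀ t, Measurable fun ω => A ω t)
    {Y : ℝ → Ω' → ℝ} (hYmeas : ∀ t, Measurable (Y t))
    (hYcont : ∀ ω, Continuous fun t => Y t ω) :
    StronglyMeasurable (Function.uncurry fun ω z =>
      if z ≤ A ω T then Y (min (sInf {t | 0 ≤ t ∧ z ≤ A ω (min t T)}) S) ω else Y S ω) := by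
  have hY : StronglyMeasurable (Function.uncurry Y) :=
    stronglyMeasurable_uncurry_of_continuous_of_stronglyMeasurable hYcont
      fun t => (hYmeas t).stronglyMeasurable
  have hτ := s7_tau_meas hT hAmono hAcont hAmeas
  have h1 : Measurable fun p : Ω' × ℝ =>
      Y (min (sInf {t | 0 ≤ t ∧ p.2 ≤ A p.1 (min t T)}) S) p.1 :=
    hY.measurable.comp ((hτ.min measurable_const).prodMk measurable_fst)
  have h2 : Measurable fun p : Ω' × ℝ => Y S p.1 := (hYmeas S).comp measurable_fst
  have hset : MeasurableSet {p : Ω' × ℝ | p.2 ≤ A p.1 T} :=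
    measurableSet_le measurable_snd ((hAmeas T).comp measurable_fst)
  exact (Measurable.ite hset h1 h2).stronglyMeasurable

private lemma s7_integral_meas {Ω' : Type*} [mΩ' : MeasurableSpace Ω'] (ν : Measure ℝ)
    [SFinite ν] {G : Ω' → ℝ → ℝ} (hG : StronglyMeasurable (Function.uncurry G)) :
    StronglyMeasurable fun ω => ∫ z, G ω z ∂ν :=
  hG.integral_prod_right

private lemma s7_comp_meas {Ω : Type*} [m0 : MeasurableSpace Ω] {Ω' : Type*}
    [mΩ' : MeasurableSpace Ω'] {W : Ω → Ω'} (hW : Measurable W) {Z : Ω → ℝ}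
    (hZ : Measurable Z) {G : Ω' → ℝ → ℝ} (hG : StronglyMeasurable (Function.uncurry G)) :
    StronglyMeasurable fun ω => G (W ω) (Z ω) :=
  hG.comp_measurable (hW.prodMk hZ)

/-- The freezing lemma (integral form). -/
private lemma s7_freezing {Ω : Type*} [m0 : MeasurableSpace Ω] {Ω' : Type*}
    [mΩ' : MeasurableSpace Ω'] (P : Measure Ω) [IsProbabilityMeasure P]
    {W : Ω → Ω'} (hW : Measurable W) {Z : Ω → ℝ} (hZ : Measurable Z)
    (hindep : ∀ B u, MeasurableSet B → MeasurableSet u →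
      P (Z ⁻¹' B ∩ W ⁻¹' u) = P (Z ⁻¹' B) * P (W ⁻¹' u))
    {G : Ω' → ℝ → ℝ} (hG : StronglyMeasurable (Function.uncurry G))
    (C : ℝ) (hGb : ∀ x z, |G x z| ≤ C) :
    ∫ ω, G (W ω) (Z ω) ∂P = ∫ x, (∫ z, G x z ∂(P.map Z)) ∂(P.map W) := by
  haveI : IsProbabilityMeasure (P.map Z) := Measure.isProbabilityMeasure_map hZ.aemeasurable
  haveI : IsProbabilityMeasure (P.map W) := Measure.isProbabilityMeasure_map hW.aemeasurable
  have hpair : Measurable fun ω => (W ω, Z ω) := hW.prodMk hZ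
  have hprod : (P.map W).prod (P.map Z) = P.map fun ω => (W ω, Z ω) := by
    refine Measure.prod_eq fun s B hs hB => ?_
    rw [Measure.map_apply hpair (hs.prod hB), Measure.map_apply hZ hB,
      Measure.map_apply hW hs]
    have hpre : (fun ω => (W ω, Z ω)) ⁻¹' (s ×ˢ B) = Z ⁻¹' B ∩ W ⁻¹' s := by
      ext ω
      simp only [Set.mem_preimage, Set.mem_prod, Set.mem_inter_iff]
      tauto
    rw [hpre, hindep B s hB hs, mul_comm]
  have hint : Integrable (Function.uncurry G) ((P.map W).prod (P.map Z)) := by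
    refine ⟨hG.aestronglyMeasurable, ?_⟩
    refine HasFiniteIntegral.of_bounded (C := C) (ae_of_all _ fun p => ?_)
    simpa [Function.uncurry, Real.norm_eq_abs] using hGb p.1 p.2
  calc ∫ ω, G (W ω) (Z ω) ∂P
      = ∫ p, Function.uncurry G p ∂(P.map fun ω => (W ω, Z ω)) := by
        rw [integral_map hpair.aemeasurable hG.aestronglyMeasurable]
        rfl
    _ = ∫ p, Function.uncurry G p ∂((P.map W).prod (P.map Z)) := by rw [hprod]
    _ = ∫ x, ∫ z, G x z ∂(P.map Z) ∂(P.map W) := integral_prod _ hint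

/-- The freezing lemma, on sets. -/
private lemma s7_freezing_set {Ω : Type*} [m0 : MeasurableSpace Ω] {Ω' : Type*}
    [mΩ' : MeasurableSpace Ω'] (P : Measure Ω) [IsProbabilityMeasure P]
    {W : Ω → Ω'} (hW : Measurable W) {Z : Ω → ℝ} (hZ : Measurable Z)
    (hindep : ∀ B u, MeasurableSet B → MeasurableSet u →
      P (Z ⁻¹' B ∩ W ⁻¹' u) = P (Z ⁻¹' B) * P (W ⁻¹' u))
    {G : Ω' → ℝ → ℝ} (hG : StronglyMeasurable (Function.uncurry G))
    (C : ℝ) (hGb : ∀ x z, |G x z| ≤ C)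
    {s : Set Ω'} (hs : MeasurableSet s) :
    ∫ ω in W ⁻¹' s, G (W ω) (Z ω) ∂P
      = ∫ ω in W ⁻¹' s, (∫ z, G (W ω) z ∂(P.map Z)) ∂P := by
  haveI : IsProbabilityMeasure (P.map Z) := Measure.isProbabilityMeasure_map hZ.aemeasurable
  have hC0 : 0 ≤ C := (abs_nonneg _).trans (hGb (W (Classical.choice (by
    by_contra h
    have : (Set.univ : Set Ω) = ∅ := Set.univ_eq_empty_iff.2 (by simpa using h)
    have h1 := measure_univ (μ := P)
    rw [this] at h1
    simp at h1))) 0)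
  have h1s : StronglyMeasurable (s.indicator fun _ => (1 : ℝ)) :=
    stronglyMeasurable_const.indicator hs
  have hG' : StronglyMeasurable
      (Function.uncurry fun x z => s.indicator (fun _ => (1 : ℝ)) x * G x z) :=
    (h1s.comp_measurable measurable_fst).mul hG
  have hb' : ∀ x z, |s.indicator (fun _ => (1 : ℝ)) x * G x z| ≤ C := by
    intro x z
    by_cases h : x ∈ s
    · simpa [Set.indicator_of_mem, h] using hGb x z
    · simpa [Set.indicator_of_notMem, h] using hC0
  have hfz := s7_freezing P hW hZ hindep hG' C hb'
  have hfm : StronglyMeasurable fun x => ∫ z, G x z ∂(P.map Z) := hG.integral_prod_right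
  have hLHS : ∫ ω, s.indicator (fun _ => (1 : ℝ)) (W ω) * G (W ω) (Z ω) ∂P
      = ∫ ω in W ⁻¹' s, G (W ω) (Z ω) ∂P := by
    rw [← integral_indicator (hW hs)]
    congr 1
    funext ω
    by_cases h : W ω ∈ s <;>
      simp [Set.indicator_apply, Set.mem_preimage, h]
  have hRHS : ∫ x, (∫ z, s.indicator (fun _ => (1 : ℝ)) x * G x z ∂(P.map Z)) ∂(P.map W)
      = ∫ ω in W ⁻¹' s, (∫ z, G (W ω) z ∂(P.map Z)) ∂P := by
    have hinner : ∀ x, (∫ z, s.indicator (fun _ => (1 : ℝ)) x * G x z ∂(P.map Z))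
        = s.indicator (fun _ => (1 : ℝ)) x * ∫ z, G x z ∂(P.map Z) := fun x =>
      integral_const_mul _ _
    simp_rw [hinner]
    have hmulm : AEStronglyMeasurable
        (fun x => s.indicator (fun _ => (1 : ℝ)) x * ∫ z, G x z ∂(P.map Z)) (P.map W) :=
      (h1s.mul hfm).aestronglyMeasurable
    rw [integral_map hW.aemeasurable hmulm, ← integral_indicator (hW hs)]
    congr 1
    funext ω
    by_cases h : W ω ∈ s <;>
      simp [Set.indicator_apply, Set.mem_preimage, h]
  rw [← hLHS, hfz, hRHS]

/-- Per-ω computation: the integral in `z` against the law of `Z` equals the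
Stieltjes integral. -/
private lemma s7_per_omega (μ : Measure ℝ) [IsProbabilityMeasure μ]
    (hμ0 : μ (Set.Iic 0) = 0)
    (FZ : StieltjesFunction ℝ) (hcdf : ∀ x, FZ x = (μ (Set.Iic x)).toReal)
    {T S : ℝ} (hT : 0 < T) (hS : S ∈ Set.Icc 0 T)
    {A : ℝ → ℝ} (hAmono : Monotone A) (hAcont : Continuous A)
    (hAnn : ∀ t, 0 ≤ A t) (hA0 : ∀ t, t ≤ 0 → A t = 0)
    (Yw : ℝ → ℝ) (hYc : Continuous Yw) (C : ℝ) (hYb : ∀ t, |Yw t| ≤ C)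
    (F : StieltjesFunction ℝ) (hF : ∀ t, F t = FZ (A t)) :
    ∫ z, (if z ≤ A T then Yw (min (sInf {t | 0 ≤ t ∧ z ≤ A (min t T)}) S) else Yw S) ∂μ
      = (∫ t in Set.Ioc 0 S, Yw t ∂F.measure) + Yw S * (1 - F S) := by
  obtain ⟨hS0, hST⟩ := hS
  have hIic : ∀ x, μ (Set.Iic x) = ENNReal.ofReal (FZ x) := fun x => by
    rw [hcdf x, ENNReal.ofReal_toReal (measure_ne_top μ _)]
  have hIoc : ∀ x, μ (Set.Ioc 0 x) = μ (Set.Iic x) := by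
    intro x
    refine le_antisymm (measure_mono Set.Ioc_subset_Iic_self) ?_
    have hsub : Set.Iic x ⊆ Set.Iic 0 ∪ Set.Ioc 0 x := by
      intro z hz
      rcases le_or_gt z 0 with h | h
      · exact Or.inl h
      · exact Or.inr ⟨h, hz⟩
    calc μ (Set.Iic x) ≤ μ (Set.Iic 0 ∪ Set.Ioc 0 x) := measure_mono hsub
      _ ≤ μ (Set.Iic 0) + μ (Set.Ioc 0 x) := measure_union_le _ _
      _ = μ (Set.Ioc 0 x) := by rw [hμ0, zero_add]
  set τ : ℝ → ℝ := fun z => sInf {t | 0 ≤ t ∧ z ≤ A (min t T)} with hτdef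
  have hτm : Measurable τ := by
    have h := s7_tau_meas (Ω' := Unit) hT (A := fun _ => A) (fun _ => hAmono)
      (fun _ => hAcont) (fun t => measurable_const)
    exact h.comp ((measurable_const : Measurable fun _ : ℝ => ()).prodMk measurable_id)
  have hg : Measurable fun z => (if z ≤ A T then Yw (min (τ z) S) else Yw S) := by
    refine Measurable.ite (measurableSet_le measurable_id measurable_const) ?_ measurable_const
    exact hYc.measurable.comp (hτm.min measurable_const)
  have hgb : ∀ z, |(if z ≤ A T then Yw (min (τ z) S) else Yw S)| ≤ C := fun z => by
    split <;> exact hYb _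
  have hgint : Integrable (fun z => if z ≤ A T then Yw (min (τ z) S) else Yw S) μ :=
    ⟨hg.aestronglyMeasurable, HasFiniteIntegral.of_bounded (ae_of_all _ fun z => by
      simpa [Real.norm_eq_abs] using hgb z)⟩
  have hAS_T : A S ≤ A T := hAmono hST
  have hg1 : ∀ z ∈ Set.Ioc 0 (A S),
      (if z ≤ A T then Yw (min (τ z) S) else Yw S) = Yw (τ z) := by
    intro z hz
    have hzT : z ≤ A T := hz.2.trans hAS_T
    rw [if_pos hzT]
    congr 1
    refine min_eq_left ((s7_tau_le_iff hT hAmono hAcont hzT S).mpr ⟨hS0, ?_⟩)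
    rw [min_eq_left hST]
    exact hz.2
  have hg2 : ∀ z ∈ Set.Ioi (A S),
      (if z ≤ A T then Yw (min (τ z) S) else Yw S) = Yw S := by
    intro z hz
    by_cases hzT : z ≤ A T
    · rw [if_pos hzT]
      congr 1
      have hnle : ¬ τ z ≤ S := fun hle => by
        have h2 := ((s7_tau_le_iff hT hAmono hAcont hzT S).mp hle).2
        rw [min_eq_left hST] at h2
        exact absurd h2 (not_le.2 hz)
      exact min_eq_right (le_of_lt (not_le.mp hnle))
    · rw [if_neg hzT]
  -- the pushforward identity
  haveI : IsFiniteMeasure (F.measure.restrict (Set.Ioc 0 S)) := by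
    constructor
    rw [Measure.restrict_apply_univ, StieltjesFunction.measure_Ioc]
    exact ENNReal.ofReal_lt_top
  have hFZ0 : FZ 0 = 0 := by rw [hcdf, hμ0]; simp
  have hF0 : ∀ t, t ≤ 0 → F t = 0 := fun t ht => by rw [hF, hA0 t ht, hFZ0]
  have hmin : ∀ t : ℝ, min S (min t T) = min S t := by
    intro t
    rcases le_total t T with h | h
    · rw [min_eq_left h]
    · rw [min_eq_right h, min_eq_left hST, min_eq_left (hST.trans h)]
  have hmap : F.measure.restrict (Set.Ioc 0 S) = (μ.restrict (Set.Ioc 0 (A S))).map τ := by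
    refine Measure.ext_of_Iic _ _ fun t => ?_
    rw [Measure.map_apply hτm measurableSet_Iic, Measure.restrict_apply measurableSet_Iic,
      Measure.restrict_apply (hτm measurableSet_Iic)]
    have h1 : Set.Iic t ∩ Set.Ioc 0 S = Set.Ioc 0 (min S t) := by
      ext z
      simp only [Set.mem_inter_iff, Set.mem_Iic, Set.mem_Ioc, le_min_iff]
      tauto
    have h2 : τ ⁻¹' Set.Iic t ∩ Set.Ioc 0 (A S) = Set.Ioc 0 (A (min S t)) := by
      ext z
      simp only [Set.mem_inter_iff, Set.mem_preimage, Set.mem_Iic, Set.mem_Ioc]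
      constructor
      · rintro ⟨hτt, hz0, hzA⟩
        have hzT : z ≤ A T := hzA.trans hAS_T
        obtain ⟨ht0, hzt⟩ := (s7_tau_le_iff hT hAmono hAcont hzT t).mp hτt
        refine ⟨hz0, ?_⟩
        calc z ≤ min (A S) (A (min t T)) := le_min hzA hzt
          _ = A (min S (min t T)) := (hAmono.map_min).symm
          _ = A (min S t) := by rw [hmin]
      · rintro ⟨hz0, hzm⟩
        have ht0 : 0 ≤ t := by
          by_contra h
          push_neg at h
          rw [hA0 _ ((min_le_right S t).trans h.le)] at hzm
          exact absurd hzm (not_le.2 hz0)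
        have hzS : z ≤ A S := hzm.trans (hAmono (min_le_left S t))
        have hzT : z ≤ A T := hzS.trans hAS_T
        refine ⟨(s7_tau_le_iff hT hAmono hAcont hzT t).mpr ⟨ht0, ?_⟩, hz0, hzS⟩
        exact hzm.trans (hAmono (le_min (min_le_right S t) ((min_le_left S t).trans hST)))
    rw [h1, h2, StieltjesFunction.measure_Ioc, hF0 0 le_rfl, sub_zero, hF, hIoc, hIic]
  have hpart1 : ∫ z in Set.Ioc 0 (A S), Yw (τ z) ∂μ
      = ∫ t in Set.Ioc 0 S, Yw t ∂F.measure := by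
    rw [show (∫ t in Set.Ioc 0 S, Yw t ∂F.measure)
        = ∫ t, Yw t ∂(F.measure.restrict (Set.Ioc 0 S)) from rfl, hmap,
      integral_map hτm.aemeasurable hYc.aestronglyMeasurable]
  have hIoi : (μ (Set.Ioi (A S))).toReal = 1 - F S := by
    have hcompl : Set.Ioi (A S) = (Set.Iic (A S))ᶜ := Set.compl_Iic.symm
    rw [hcompl, measure_compl measurableSet_Iic (measure_ne_top _ _), measure_univ]
    rw [ENNReal.toReal_sub_of_le prob_le_one ENNReal.one_ne_top, ENNReal.toReal_one,
      ← hcdf, hF]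
  have hpart2 : ∫ z in Set.Ioi (A S),
      (if z ≤ A T then Yw (min (τ z) S) else Yw S) ∂μ = Yw S * (1 - F S) := by
    rw [setIntegral_congr_fun measurableSet_Ioi hg2, setIntegral_const, measureReal_def, hIoi,
      smul_eq_mul, mul_comm]
  have hsplit1 : ∫ z, (if z ≤ A T then Yw (min (τ z) S) else Yw S) ∂μ
      = ∫ z in Set.Ioi 0, (if z ≤ A T then Yw (min (τ z) S) else Yw S) ∂μ := by
    rw [← integral_add_compl measurableSet_Iic hgint,
      Measure.restrict_eq_zero.mpr hμ0, integral_zero_measure, zero_add, Set.compl_Iic]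
  have hdisj : Disjoint (Set.Ioc 0 (A S)) (Set.Ioi (A S)) :=
    Set.disjoint_left.mpr fun z hz hz' => absurd hz.2 (not_le.2 hz')
  have hsplit2 : ∫ z in Set.Ioi 0, (if z ≤ A T then Yw (min (τ z) S) else Yw S) ∂μ
      = (∫ z in Set.Ioc 0 (A S), (if z ≤ A T then Yw (min (τ z) S) else Yw S) ∂μ)
        + ∫ z in Set.Ioi (A S), (if z ≤ A T then Yw (min (τ z) S) else Yw S) ∂μ := by
    rw [← Set.Ioc_union_Ioi_eq_Ioi (hAnn S)]
    exact setIntegral_union hdisj measurableSet_Ioi hgint.integrableOn hgint.integrableOn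
  rw [hsplit1, hsplit2, setIntegral_congr_fun measurableSet_Ioc hg1, hpart1, hpart2]

end AuxStatement7

/-- disintegration formula for randomized stopping times. If `Z ≥ 0` is
independent of `𝒢`, `A(ω, ·)` is a `𝒢`-measurable nondecreasing continuous process vanishing
at `0`, `τ = inf{t ≥ 0 : A(t∧T) ≥ Z}` (with `inf ∅ = ∞`), and `Y` is a bounded continuous
`𝒢`-measurable process, then
`E[Y_{τ∧S} | 𝒢] = ∫₀^S Y_t dF̃(t) + Y_S (1 − F̃(S))`, where `F̃(t) = F_Z(A(t))`. -/
theorem statement7 {Ω : Type*} {m0 : MeasurableSpace Ω} (P : Measure Ω)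
    [IsProbabilityMeasure P]
    (Z : Ω → ℝ) (hZmeas : Measurable Z) (hZnn : ∀ ω, 0 ≤ Z ω)
    (hZpos : ∀ᵐ ω ∂P, 0 < Z ω)
    (FZ : StieltjesFunction ℝ) (hFZ : FZ = cdf (P.map Z))
    (𝒢 : MeasurableSpace Ω) (h𝒢 : 𝒢 ≤ m0)
    (hindep : Indep (MeasurableSpace.comap Z inferInstance) 𝒢 P)
    (T S : ℝ) (hT : 0 < T) (hS : S ∈ Set.Icc 0 T)
    (A : Ω → ℝ → ℝ)
    (hAmono : ∀ ω, Monotone (A ω)) (hAcont : ∀ ω, Continuous (A ω))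
    (hAnn : ∀ ω t, 0 ≤ A ω t) (hA0 : ∀ ω t, t ≤ 0 → A ω t = 0)
    (hAmeas : ∀ t, Measurable[𝒢] fun ω => A ω t)
    (Y : ℝ → Ω → ℝ) (hYmeas : ∀ t, Measurable[𝒢] (Y t))
    (hYcont : ∀ ω, Continuous fun t => Y t ω)
    (C : ℝ) (hYbdd : ∀ t ω, |Y t ω| ≤ C)
    (F : Ω → StieltjesFunction ℝ)
    (hF : ∀ ω t, F ω t = FZ (A ω t)) :
    MeasureTheory.condExp 𝒢 P
        (fun ω =>
          if _ : ∃ t, 0 ≤ t ∧ Z ω ≤ A ω (min t T) then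
            Y (min (sInf {t | 0 ≤ t ∧ Z ω ≤ A ω (min t T)}) S) ω
          else Y S ω)
      =ᵐ[P] fun ω => (∫ t in Set.Ioc 0 S, Y t ω ∂(F ω).measure) + Y S ω * (1 - F ω S) := by
  letI : MeasurableSpace Ω := m0
  haveI : IsProbabilityMeasure (P.map Z) := Measure.isProbabilityMeasure_map hZmeas.aemeasurable
  set μ : Measure ℝ := P.map Z with hμdef
  -- basic facts about the law of Z
  have hμ0 : μ (Set.Iic 0) = 0 := by
    rw [hμdef, Measure.map_apply hZmeas measurableSet_Iic]
    rw [ae_iff] at hZpos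
    refine measure_mono_null ?_ hZpos
    intro ω hω
    simpa using not_lt.2 (hω : Z ω ≤ 0)
  have hcdf : ∀ x, FZ x = (μ (Set.Iic x)).toReal := fun x => by
    rw [hFZ]; exact cdf_eq_real _ _
  -- the integrand
  set G : Ω → ℝ → ℝ := fun ω z =>
    if z ≤ A ω T then Y (min (sInf {t | 0 ≤ t ∧ z ≤ A ω (min t T)}) S) ω else Y S ω
    with hGdef
  have hfun_eq : (fun ω =>
      if _ : ∃ t, 0 ≤ t ∧ Z ω ≤ A ω (min t T) then
        Y (min (sInf {t | 0 ≤ t ∧ Z ω ≤ A ω (min t T)}) S) ω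
      else Y S ω) = fun ω => G ω (Z ω) := by
    funext ω
    show _ = if Z ω ≤ A ω T then
      Y (min (sInf {t | 0 ≤ t ∧ Z ω ≤ A ω (min t T)}) S) ω else Y S ω
    by_cases h : Z ω ≤ A ω T
    · rw [dif_pos ⟨T, hT.le, by rwa [min_self]⟩, if_pos h]
    · rw [dif_neg, if_neg h]
      rintro ⟨t, ht0, hle⟩
      exact h (hle.trans (hAmono ω (min_le_right t T)))
  rw [hfun_eq]
  -- measurability facts
  have hG : StronglyMeasurable[MeasurableSpace.prod 𝒢 inferInstance] (Function.uncurry G) :=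
    s7_G_meas (mΩ' := 𝒢) hT S hAmono hAcont hAmeas hYmeas hYcont
  have hGb : ∀ ω z, |G ω z| ≤ C := fun ω z => by
    show |if z ≤ A ω T then
      Y (min (sInf {t | 0 ≤ t ∧ z ≤ A ω (min t T)}) S) ω else Y S ω| ≤ C
    split <;> exact hYbdd _ _
  set hfun : Ω → ℝ := fun ω => ∫ z, G ω z ∂μ with hfundef
  have hfun_meas : StronglyMeasurable[𝒢] hfun := s7_integral_meas (mΩ' := 𝒢) μ hG
  have hid : @Measurable Ω Ω m0 𝒢 id := measurable_id'' h𝒢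
  have hf_meas : StronglyMeasurable fun ω => G ω (Z ω) :=
    s7_comp_meas (mΩ' := 𝒢) hid hZmeas hG
  have hf_int : Integrable (fun ω => G ω (Z ω)) P :=
    ⟨hf_meas.aestronglyMeasurable, HasFiniteIntegral.of_bounded (ae_of_all _ fun ω => by
      simpa [Real.norm_eq_abs] using hGb ω (Z ω))⟩
  -- per-ω identification of the RHS with hfun
  have hRHS_eq : ∀ ω,
      (∫ t in Set.Ioc 0 S, Y t ω ∂(F ω).measure) + Y S ω * (1 - F ω S) = hfun ω := by
    intro ω
    exact (s7_per_omega μ hμ0 FZ hcdf hT hS (hAmono ω) (hAcont ω) (hAnn ω)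
      (fun t ht => hA0 ω t ht) (fun t => Y t ω) (hYcont ω) C (fun t => hYbdd t ω)
      (F ω) (fun t => hF ω t)).symm
  -- bound on hfun
  have hfun_bdd : ∀ ω, ‖hfun ω‖ ≤ C := by
    intro ω
    have := norm_integral_le_of_norm_le_const (μ := μ) (f := G ω) (C := C)
      (ae_of_all _ fun z => by simpa [Real.norm_eq_abs] using hGb ω z)
    simpa [measure_univ] using this
  have hfun_int : Integrable hfun P :=
    ⟨(hfun_meas.mono h𝒢).aestronglyMeasurable,
      HasFiniteIntegral.of_bounded (ae_of_all _ hfun_bdd)⟩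
  -- independence in the needed form
  have hindep' : ∀ B u, MeasurableSet B → MeasurableSet[𝒢] u →
      P (Z ⁻¹' B ∩ (id : Ω → Ω) ⁻¹' u) = P (Z ⁻¹' B) * P ((id : Ω → Ω) ⁻¹' u) := by
    intro B u hB hu
    have := ((Indep_iff _ _ _).mp hindep) (Z ⁻¹' B) u ⟨B, hB, rfl⟩ hu
    simpa using this
  -- the key set-integral identity
  have key : ∀ s : Set Ω, MeasurableSet[𝒢] s →
      ∫ ω in s, hfun ω ∂P = ∫ ω in s, G ω (Z ω) ∂P := by
    intro s hs
    have h := s7_freezing_set (mΩ' := 𝒢) P hid hZmeas hindep' hG C hGb hs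
    simpa using h.symm
  refine (ae_eq_condExp_of_forall_setIntegral_eq h𝒢 hf_int ?_ ?_ ?_).symm
  · intro s hs hμs
    refine (Integrable.integrableOn ?_)
    refine hfun_int.congr (ae_of_all _ fun ω => ?_)
    exact (hRHS_eq ω).symm
  · intro s hs hμs
    have h1 : ∫ ω in s, ((∫ t in Set.Ioc 0 S, Y t ω ∂(F ω).measure) + Y S ω * (1 - F ω S)) ∂P
        = ∫ ω in s, hfun ω ∂P :=
      integral_congr_ae (ae_of_all _ fun ω => hRHS_eq ω)
    rw [h1]
    exact key s hs
  · exact ⟨hfun, hfun_meas, ae_of_all _ fun ω => hRHS_eq ω⟩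
end

section
/- Let ξ be a standard normal random variable and define X_t = t·ξ for t ∈ [0,1]. Then the optimal stopping value sup_{τ ∈ S} E[X_{τ∧1}] over stopping times of the filtration generated by X equals 1/√(2π). Moreover, the stopping times τₙ := 1 if X_{1/n} > 0 and τₙ := 1/n if X_{1/n} ≤ 0 satisfy E[X_{τₙ}] → 1/√(2π). -/
open MeasureTheory Filter Real Set ProbabilityTheory
open scoped ENNReal NNReal

lemma exp_deriv_aux (x : ℝ) :
    HasDerivAt (fun y : ℝ => -Real.exp (-y ^ 2 / 2)) (x * Real.exp (-x ^ 2 / 2)) x := by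
  have h : HasDerivAt (fun y : ℝ => -y ^ 2 / 2) (-x) x := by
    have : HasDerivAt (fun y : ℝ => -y ^ 2 / 2) (-(↑2 * x ^ (2 - 1)) / 2) x := ((hasDerivAt_pow 2 x).neg).div_const 2
    convert this using 1
    ring
  have : HasDerivAt (fun y : ℝ => -Real.exp (-y ^ 2 / 2)) (-(Real.exp (-x ^ 2 / 2) * -x)) x := (h.exp).neg
  convert this using 1
  ring

lemma integrableOn_aux (s : Set ℝ) : IntegrableOn (fun x => x * Real.exp (-x ^ 2 / 2)) s := by
  apply Integrable.integrableOn
  have := integrable_mul_exp_neg_mul_sq (b := 2⁻¹) (by norm_num)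
  convert this using 2 with x
  ring_nf

lemma I_Ioi : ∫ x in Set.Ioi (0:ℝ), x * Real.exp (-x ^ 2 / 2) = 1 := by
  have := integral_Ioi_of_hasDerivAt_of_tendsto (f := fun y => -Real.exp (-y ^ 2 / 2))
    (f' := fun x => x * Real.exp (-x ^ 2 / 2)) (a := 0) (m := 0)
    ?_ (fun x _ => exp_deriv_aux x) (integrableOn_aux _) ?_
  · simpa using this
  · exact (exp_deriv_aux 0).continuousAt.continuousWithinAt
  · rw [show (0:ℝ) = -0 by ring]
    apply Tendsto.neg
    apply Real.tendsto_exp_atBot.comp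
    have : Tendsto (fun x : ℝ => x ^ 2 / 2) atTop atTop :=
      (tendsto_pow_atTop two_ne_zero).atTop_div_const (by norm_num)
    simpa [neg_div, Function.comp_def] using tendsto_neg_atTop_atBot.comp this

lemma I_Iic : ∫ x in Set.Iic (0:ℝ), x * Real.exp (-x ^ 2 / 2) = -1 := by
  have := integral_Iic_of_hasDerivAt_of_tendsto (f := fun y => -Real.exp (-y ^ 2 / 2))
    (f' := fun x => x * Real.exp (-x ^ 2 / 2)) (a := 0) (m := 0)
    ?_ (fun x _ => exp_deriv_aux x) (integrableOn_aux _) ?_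
  · simpa using this
  · exact (exp_deriv_aux 0).continuousAt.continuousWithinAt
  · rw [show (0:ℝ) = -0 by ring]
    apply Tendsto.neg
    apply Real.tendsto_exp_atBot.comp
    have : Tendsto (fun x : ℝ => x ^ 2 / 2) atBot atTop := by
      have h2 : Tendsto (fun x : ℝ => x ^ 2) atBot atTop := by
        have := (tendsto_pow_atTop (two_ne_zero)).comp tendsto_neg_atBot_atTop (α := ℝ)
        simpa [Function.comp_def, neg_sq] using this
      exact h2.atTop_div_const (by norm_num)
    simpa [neg_div, Function.comp_def] using tendsto_neg_atTop_atBot.comp this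

lemma pdf_eq (x : ℝ) :
    gaussianPDFReal 0 1 x = (Real.sqrt (2 * π))⁻¹ * Real.exp (-x ^ 2 / 2) := by
  simp [gaussianPDFReal]

lemma gauss_density_int (f : ℝ → ℝ) :
    ∫ x, f x ∂(gaussianReal 0 1) = ∫ x, gaussianPDFReal 0 1 x * f x := by
  rw [gaussianReal_of_var_ne_zero 0 one_ne_zero, gaussianPDF_def]
  have : ∀ x : ℝ, ENNReal.ofReal (gaussianPDFReal 0 1 x)
      = ((gaussianPDFReal 0 1 x).toNNReal : ℝ≥0∞) := fun x => rfl
  simp_rw [this]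
  rw [integral_withDensity_eq_integral_smul (measurable_gaussianPDFReal 0 1).real_toNNReal]
  congr 1
  ext x
  rw [NNReal.smul_def, Real.coe_toNNReal _ (gaussianPDFReal_nonneg 0 1 x), smul_eq_mul]

lemma intA : ∫ x, (if 0 < x then x else 0) ∂(gaussianReal 0 1) = (Real.sqrt (2 * π))⁻¹ := by
  rw [gauss_density_int]
  have h1 : (fun x : ℝ => gaussianPDFReal 0 1 x * (if 0 < x then x else 0))
      = Set.indicator (Set.Ioi 0) (fun x => (Real.sqrt (2 * π))⁻¹ * (x * Real.exp (-x ^ 2 / 2))) := by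
    ext x
    by_cases hx : 0 < x
    · simp only [Set.indicator, Set.mem_Ioi, hx, if_pos, pdf_eq]
      ring
    · simp [Set.indicator, hx]
  rw [h1, integral_indicator measurableSet_Ioi, integral_const_mul, I_Ioi, mul_one]

lemma intB : ∫ x, (if 0 < x then 0 else x) ∂(gaussianReal 0 1) = -(Real.sqrt (2 * π))⁻¹ := by
  rw [gauss_density_int]
  have h1 : (fun x : ℝ => gaussianPDFReal 0 1 x * (if 0 < x then 0 else x))
      = Set.indicator (Set.Iic 0) (fun x => (Real.sqrt (2 * π))⁻¹ * (x * Real.exp (-x ^ 2 / 2))) := by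
    ext x
    by_cases hx : 0 < x
    · simp [Set.indicator, hx, not_le.mpr hx]
    · simp only [Set.indicator, Set.mem_Iic, not_lt.1 hx, if_pos, hx, if_neg, if_false, pdf_eq]
      ring
  rw [h1, integral_indicator measurableSet_Iic, integral_const_mul, I_Iic]
  ring

lemma int_id : Integrable (fun x : ℝ => x) (gaussianReal 0 1) := by
  rw [gaussianReal_of_var_ne_zero 0 one_ne_zero, gaussianPDF_def]
  have : ∀ x : ℝ, ENNReal.ofReal (gaussianPDFReal 0 1 x)
      = ((gaussianPDFReal 0 1 x).toNNReal : ℝ≥0∞) := fun x => rfl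
  simp_rw [this]
  rw [integrable_withDensity_iff_integrable_smul (measurable_gaussianPDFReal 0 1).real_toNNReal]
  have : (fun x : ℝ => (gaussianPDFReal 0 1 x).toNNReal • x)
      = fun x => (Real.sqrt (2 * π))⁻¹ * (x * Real.exp (-x ^ 2 / 2)) := by
    ext x
    rw [NNReal.smul_def, Real.coe_toNNReal _ (gaussianPDFReal_nonneg 0 1 x), smul_eq_mul, pdf_eq]
    ring
  rw [this]
  exact (integrableOn_univ.mp (integrableOn_aux Set.univ)).const_mul _


/-- for `X_t = t·ξ` with `ξ` standard normal (the `H = 1` fractional Brownian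
motion), the optimal stopping value over `[0,1]` equals `1/√(2π)`, and the stopping times
`τₙ = 1` if `X_{1/n} > 0`, `τₙ = 1/n` otherwise, satisfy `E[X_{τₙ}] → 1/√(2π)`. -/
theorem statement9 {Ω : Type*} {m0 : MeasurableSpace Ω} (P : Measure Ω)
    [IsProbabilityMeasure P]
    (ξ : Ω → ℝ) (hξ : Measurable ξ)
    (hgauss : P.map ξ = ProbabilityTheory.gaussianReal 0 1)
    (ℱ : Filtration ℝ m0)
    (hℱ : ∀ t, ℱ t =
      ⨆ s ∈ Set.Icc (0:ℝ) t, MeasurableSpace.comap (fun ω => s * ξ ω) inferInstance) :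
    (⨆ τ : {τ : Ω → ℝ // IsStoppingTime ℱ (fun ω => (τ ω : WithTop ℝ)) ∧ ∀ ω, 0 ≤ τ ω},
        ∫ ω, min (τ.1 ω) 1 * ξ ω ∂P) = 1 / Real.sqrt (2 * Real.pi) ∧
    Tendsto (fun n : ℕ =>
        ∫ ω, (if 0 < (1/(n:ℝ)) * ξ ω then (1:ℝ) else 1/(n:ℝ)) * ξ ω ∂P)
      atTop (nhds (1 / Real.sqrt (2 * Real.pi))) := by
  set c : ℝ := (Real.sqrt (2 * Real.pi))⁻¹ with hc
  have hfA : Measurable fun x : ℝ => if 0 < x then x else 0 :=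
    Measurable.ite measurableSet_Ioi measurable_id measurable_const
  have hfB : Measurable fun x : ℝ => if 0 < x then 0 else x :=
    Measurable.ite measurableSet_Ioi measurable_const measurable_id
  have hξint : Integrable ξ P := by
    have h := int_id
    rw [← hgauss] at h
    exact (integrable_map_measure aestronglyMeasurable_id hξ.aemeasurable).mp h
  have hA : ∫ ω, (if 0 < ξ ω then ξ ω else 0) ∂P = c := by
    calc ∫ ω, (if 0 < ξ ω then ξ ω else 0) ∂P
        = ∫ x, (if 0 < x then x else 0) ∂(P.map ξ) :=
          (integral_map hξ.aemeasurable hfA.aestronglyMeasurable).symm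
      _ = c := by rw [hgauss]; exact intA
  have hB : ∫ ω, (if 0 < ξ ω then 0 else ξ ω) ∂P = -c := by
    calc ∫ ω, (if 0 < ξ ω then 0 else ξ ω) ∂P
        = ∫ x, (if 0 < x then 0 else x) ∂(P.map ξ) :=
          (integral_map hξ.aemeasurable hfB.aestronglyMeasurable).symm
      _ = -c := by rw [hgauss]; exact intB
  have hIA : Integrable (fun ω => if 0 < ξ ω then ξ ω else 0) P := by
    refine hξint.mono (hfA.comp hξ).aestronglyMeasurable
      (Filter.Eventually.of_forall fun ω => ?_)
    by_cases h : 0 < ξ ω <;> simp [h, Real.norm_eq_abs, abs_nonneg]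
  have hIB : Integrable (fun ω => if 0 < ξ ω then 0 else ξ ω) P := by
    refine hξint.mono (hfB.comp hξ).aestronglyMeasurable
      (Filter.Eventually.of_forall fun ω => ?_)
    by_cases h : 0 < ξ ω <;> simp [h, Real.norm_eq_abs, abs_nonneg]
  -- key value computation
  have key : ∀ n : ℕ, 1 ≤ n →
      ∫ ω, (if 0 < (1/(n:ℝ)) * ξ ω then (1:ℝ) else 1/(n:ℝ)) * ξ ω ∂P = (1 - 1/(n:ℝ)) * c := by
    intro n hn
    have hnpos : 0 < (1/(n:ℝ)) := by positivity
    have heq : (fun ω => (if 0 < (1/(n:ℝ)) * ξ ω then (1:ℝ) else 1/(n:ℝ)) * ξ ω)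
        = fun ω => (if 0 < ξ ω then ξ ω else 0) + (1/(n:ℝ)) * (if 0 < ξ ω then 0 else ξ ω) := by
      funext ω
      by_cases h : 0 < ξ ω
      · rw [if_pos (mul_pos hnpos h), if_pos h, if_pos h]; ring
      · rw [if_neg (by nlinarith [not_lt.1 h, hnpos.le]), if_neg h, if_neg h]; ring
    rw [heq, integral_add hIA (hIB.const_mul _), integral_const_mul, hA, hB]
    ring
  have hT : Tendsto (fun n : ℕ => (1 - 1/(n:ℝ)) * c) atTop (nhds c) := by
    have h0 := tendsto_one_div_atTop_nhds_zero_nat (𝕜 := ℝ)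
    have := (tendsto_const_nhds (x := (1:ℝ)) (f := atTop)).sub h0
    simpa using this.mul_const c
  have part2 : Tendsto (fun n : ℕ =>
      ∫ ω, (if 0 < (1/(n:ℝ)) * ξ ω then (1:ℝ) else 1/(n:ℝ)) * ξ ω ∂P) atTop
      (nhds (1 / Real.sqrt (2 * Real.pi))) := by
    rw [one_div]
    refine hT.congr' ?_
    filter_upwards [eventually_ge_atTop 1] with n hn
    exact (key n hn).symm
  -- upper bound
  have hub : ∀ τ : {τ : Ω → ℝ // IsStoppingTime ℱ (fun ω => (τ ω : WithTop ℝ)) ∧ ∀ ω, 0 ≤ τ ω},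
      ∫ ω, min (τ.1 ω) 1 * ξ ω ∂P ≤ c := by
    rintro ⟨τ, hst, hpos⟩
    have hτm : Measurable τ := measurable_of_Iic fun t => ℱ.le t _ (by have := hst t; simp only [WithTop.coe_le_coe] at this; exact this)
    have hm : Measurable fun ω => min (τ ω) 1 * ξ ω := (hτm.min measurable_const).mul hξ
    have hint : Integrable (fun ω => min (τ ω) 1 * ξ ω) P := by
      refine hξint.mono hm.aestronglyMeasurable (Filter.Eventually.of_forall fun ω => ?_)
      have h0 : 0 ≤ min (τ ω) 1 := le_min (hpos ω) zero_le_one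
      have h1 : min (τ ω) 1 ≤ 1 := min_le_right _ _
      rw [Real.norm_eq_abs, Real.norm_eq_abs, abs_mul, abs_of_nonneg h0]
      nlinarith [abs_nonneg (ξ ω)]
    rw [← hA]
    refine integral_mono hint hIA fun ω => ?_
    simp only
    by_cases h : 0 < ξ ω
    · rw [if_pos h]
      have h1 : min (τ ω) 1 ≤ 1 := min_le_right _ _
      nlinarith
    · rw [if_neg h]
      have h0 : 0 ≤ min (τ ω) 1 := le_min (hpos ω) zero_le_one
      nlinarith [not_lt.1 h]
  -- the approximating stopping times
  have hstop : ∀ n : ℕ, 1 ≤ n →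
      IsStoppingTime ℱ (fun ω => ((if 0 < ξ ω then (1:ℝ) else 1/(n:ℝ) : ℝ) : WithTop ℝ)) := by
    intro n hn
    have hnpos : 0 < (1/(n:ℝ)) := by positivity
    have hncast : (1:ℝ) ≤ (n:ℝ) := by exact_mod_cast hn
    have hn1 : (1/(n:ℝ)) ≤ 1 := by
      rw [div_le_one (by positivity)]; exact hncast
    intro t
    simp only [WithTop.coe_le_coe]
    by_cases ht1 : 1 ≤ t
    · have hset : {ω | (if 0 < ξ ω then (1:ℝ) else 1/(n:ℝ)) ≤ t} = Set.univ := by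
        ext ω
        simp only [Set.mem_setOf_eq, Set.mem_univ, iff_true]
        split
        · exact ht1
        · exact hn1.trans ht1
      rw [hset]
      exact MeasurableSet.univ
    · by_cases ht2 : 1/(n:ℝ) ≤ t
      · have htpos : 0 < t := lt_of_lt_of_le hnpos ht2
        have hset : {ω | (if 0 < ξ ω then (1:ℝ) else 1/(n:ℝ)) ≤ t}
            = (fun ω => t * ξ ω) ⁻¹' (Set.Iic 0) := by
          ext ω
          simp only [Set.mem_setOf_eq, Set.mem_preimage, Set.mem_Iic]
          constructor
          · intro h
            by_cases hξω : 0 < ξ ω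
            · exact absurd (by rwa [if_pos hξω] at h) ht1
            · nlinarith [not_lt.1 hξω]
          · intro h
            have hξω : ¬ 0 < ξ ω := fun hcon => absurd h (not_le.mpr (mul_pos htpos hcon))
            rw [if_neg hξω]; exact ht2
        rw [hset, hℱ t]
        have hle : MeasurableSpace.comap (fun ω => t * ξ ω) inferInstance ≤
            ⨆ s ∈ Set.Icc (0:ℝ) t, MeasurableSpace.comap (fun ω => s * ξ ω) inferInstance :=
          le_biSup (fun s => MeasurableSpace.comap (fun ω => s * ξ ω) inferInstance)
            (Set.mem_Icc.mpr ⟨htpos.le, le_rfl⟩)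
        exact hle _ (MeasurableSpace.measurableSet_comap.mpr ⟨Set.Iic 0, measurableSet_Iic, rfl⟩)
      · have hset : {ω | (if 0 < ξ ω then (1:ℝ) else 1/(n:ℝ)) ≤ t} = ∅ := by
          ext ω
          simp only [Set.mem_setOf_eq, Set.mem_empty_iff_false, iff_false, not_le]
          split
          · exact lt_of_lt_of_le (lt_of_not_ge ht2) hn1
          · exact lt_of_not_ge ht2
        rw [hset]
        exact @MeasurableSet.empty _ (ℱ t)
  have hval : ∀ n : ℕ, 1 ≤ n →
      ∫ ω, min (if 0 < ξ ω then (1:ℝ) else 1/(n:ℝ)) 1 * ξ ω ∂P = (1 - 1/(n:ℝ)) * c := by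
    intro n hn
    have hnpos : 0 < (1/(n:ℝ)) := by positivity
    have hncast : (1:ℝ) ≤ (n:ℝ) := by exact_mod_cast hn
    have hn1 : (1/(n:ℝ)) ≤ 1 := by rw [div_le_one (by positivity)]; exact hncast
    rw [← key n hn]
    congr 1
    funext ω
    by_cases h : 0 < ξ ω
    · rw [if_pos h, if_pos (mul_pos hnpos h), min_self]
    · rw [if_neg h, if_neg (by nlinarith [not_lt.1 h, hnpos.le]), min_eq_left hn1]
  have hbdd : BddAbove (Set.range fun τ : {τ : Ω → ℝ // IsStoppingTime ℱ (fun ω => (τ ω : WithTop ℝ)) ∧ ∀ ω, 0 ≤ τ ω} =>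
      ∫ ω, min (τ.1 ω) 1 * ξ ω ∂P) := by
    refine ⟨c, ?_⟩
    rintro x ⟨τ, rfl⟩
    exact hub τ
  have hne : Nonempty {τ : Ω → ℝ // IsStoppingTime ℱ (fun ω => (τ ω : WithTop ℝ)) ∧ ∀ ω, 0 ≤ τ ω} :=
    ⟨⟨fun _ => 0, isStoppingTime_const ℱ 0, fun _ => le_rfl⟩⟩
  refine ⟨?_, part2⟩
  rw [one_div]
  apply le_antisymm
  · exact ciSup_le hub
  · refine le_of_tendsto hT (eventually_atTop.2 ⟨1, fun n hn => ?_⟩)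
    calc (1 - 1/(n:ℝ)) * c
        = ∫ ω, min (if 0 < ξ ω then (1:ℝ) else 1/(n:ℝ)) 1 * ξ ω ∂P := (hval n hn).symm
      _ ≤ _ := le_ciSup hbdd
          ⟨fun ω => if 0 < ξ ω then (1:ℝ) else 1/(n:ℝ), hstop n hn,
            fun ω => by dsimp only; split <;> positivity⟩
end

section
/- With μ_j defined by μ_J = 0 and μ_j = √(j/(j+1))·γ(μ_{j+1}√((j+1)/j)) where γ(x) = φ(x) + xΦ(x), one has μ_j ≥ γ(2μ_{j+1})/2 for all 1 ≤ j ≤ J−1, hence μ₁ ≥ f^{∘(J−1)}(0) with f(x) := γ(2x)/2; since f is continuous with f(x) > x for all x ≥ 0, it follows that μ₁ → ∞ as J → ∞. -/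
noncomputable section

/-- The standard normal density `φ`. -/
def npdf (x : ℝ) : ℝ := Real.exp (-x ^ 2 / 2) / Real.sqrt (2 * Real.pi)

/-- The standard normal cumulative distribution function `Φ`. -/
def ncdf (x : ℝ) : ℝ := ∫ u in Set.Iic x, npdf u

/-- `γ(x) = φ(x) + x Φ(x)`. -/
def gammaFn (x : ℝ) : ℝ := npdf x + x * ncdf x

open Real MeasureTheory Set Filter

lemma npdf_eq (x : ℝ) : npdf x = Real.exp (-(1/2) * x^2) / Real.sqrt (2*Real.pi) := by
  rw [npdf]; ring_nf

lemma npdf_pos (x : ℝ) : 0 < npdf x :=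
  div_pos (Real.exp_pos _) (Real.sqrt_pos.2 (by positivity))

lemma npdf_cont : Continuous npdf := by
  unfold npdf; fun_prop

lemma npdf_integrable : Integrable npdf := by
  have h := integrable_exp_neg_mul_sq (b := 1/2) (by norm_num)
  have := h.div_const (Real.sqrt (2*Real.pi))
  exact this.congr (Filter.Eventually.of_forall fun x => (npdf_eq x).symm)

lemma mul_npdf_integrable : Integrable (fun x => x * npdf x) := by
  have h := integrable_mul_exp_neg_mul_sq (b := 1/2) (by norm_num)
  have := h.div_const (Real.sqrt (2*Real.pi))
  exact this.congr (Filter.Eventually.of_forall fun x => by simp only [npdf_eq]; ring)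

lemma integral_npdf : ∫ x, npdf x = 1 := by
  have h : ∫ x : ℝ, Real.exp (-(1/2) * x^2) = Real.sqrt (Real.pi / (1/2)) :=
    integral_gaussian (1/2)
  have h2 : ∫ x, npdf x = (∫ x : ℝ, Real.exp (-(1/2) * x^2)) / Real.sqrt (2*Real.pi) := by
    rw [← integral_div]; exact integral_congr_ae (Eventually.of_forall fun x => npdf_eq x)
  rw [h2, h]
  rw [show Real.pi / (1/2) = 2 * Real.pi by ring]
  exact div_self (by positivity)

lemma npdf_hasDerivAt (x : ℝ) : HasDerivAt npdf (-x * npdf x) x := by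
  have h1 : HasDerivAt (fun x : ℝ => -x^2/2) (-x) x := by
    have := ((hasDerivAt_pow 2 x).neg).div_const 2
    exact this.congr_deriv (by norm_num; ring)
  have h2 := (h1.exp).div_const (Real.sqrt (2*Real.pi))
  refine h2.congr_deriv ?_
  rw [npdf]; ring

lemma ncdf_sub (a b : ℝ) : ncdf b - ncdf a = ∫ u in a..b, npdf u :=
  intervalIntegral.integral_Iic_sub_Iic npdf_integrable.integrableOn npdf_integrable.integrableOn

lemma ncdf_hasDerivAt (x : ℝ) : HasDerivAt ncdf (npdf x) x := by
  have key : ∀ y, ncdf y = ncdf 0 + ∫ u in (0:ℝ)..y, npdf u := by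
    intro y; rw [← ncdf_sub 0 y]; ring
  have h : HasDerivAt (fun y => ncdf 0 + ∫ u in (0:ℝ)..y, npdf u) (npdf x) x := by
    refine (HasDerivAt.const_add _ ?_)
    exact intervalIntegral.integral_hasDerivAt_right
      npdf_integrable.intervalIntegrable
      (npdf_cont.stronglyMeasurableAtFilter _ _)
      npdf_cont.continuousAt
  exact h.congr_of_eventuallyEq (Eventually.of_forall key)

lemma ncdf_nonneg (x : ℝ) : 0 ≤ ncdf x :=
  setIntegral_nonneg measurableSet_Iic (fun u _ => (npdf_pos u).le)

lemma ncdf_le_one (x : ℝ) : ncdf x ≤ 1 := by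
  rw [← integral_npdf]
  exact setIntegral_le_integral npdf_integrable (Eventually.of_forall fun u => (npdf_pos u).le)

lemma gammaFn_hasDerivAt (x : ℝ) : HasDerivAt gammaFn (ncdf x) x := by
  have h := (npdf_hasDerivAt x).add ((hasDerivAt_id x).mul (ncdf_hasDerivAt x))
  exact h.congr_deriv (by simp only [id]; ring)

lemma gammaFn_mono : Monotone gammaFn :=
  monotone_of_deriv_nonneg (fun x => (gammaFn_hasDerivAt x).differentiableAt)
    (fun x => by rw [(gammaFn_hasDerivAt x).deriv]; exact ncdf_nonneg x)

lemma gammaFn_cont : Continuous gammaFn :=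
  continuous_iff_continuousAt.2 fun x => (gammaFn_hasDerivAt x).continuousAt

lemma key2 {a b : ℝ} (ha : 0 < a) (hab : a ≤ b) : a * gammaFn b ≤ b * gammaFn a := by
  have hb : 0 < b := lt_of_lt_of_le ha hab
  have hint1 : ∫ u in a..b, u * npdf u = npdf a - npdf b := by
    have hder : ∀ u ∈ Set.uIcc a b, HasDerivAt (fun y => -npdf y) (u * npdf u) u := by
      intro u _
      have := (npdf_hasDerivAt u).neg
      exact this.congr_deriv (by ring)
    have := intervalIntegral.integral_eq_sub_of_hasDerivAt hder
      mul_npdf_integrable.intervalIntegrable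
    rw [this]; ring
  have hmono : ∫ u in a..b, npdf u ≤ ∫ u in a..b, u * npdf u / a := by
    apply intervalIntegral.integral_mono_on hab
      npdf_integrable.intervalIntegrable
      (mul_npdf_integrable.div_const a).intervalIntegrable
    intro u hu
    rw [le_div_iff₀ ha]
    nlinarith [npdf_pos u, hu.1]
  rw [intervalIntegral.integral_div, hint1] at hmono
  have hncdf : ncdf b - ncdf a = ∫ u in a..b, npdf u := ncdf_sub a b
  have h3 : a * b * (ncdf b - ncdf a) ≤ b * (npdf a - npdf b) := by
    rw [hncdf]
    calc a * b * ∫ u in a..b, npdf u ≤ a * b * ((npdf a - npdf b) / a) :=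
          mul_le_mul_of_nonneg_left hmono (by positivity)
      _ = b * (npdf a - npdf b) := by field_simp
  unfold gammaFn
  nlinarith [npdf_pos b, h3]

lemma npdf_tendsto : Filter.Tendsto npdf atTop (nhds 0) := by
  have h1 : Filter.Tendsto (fun x : ℝ => -x^2/2) atTop atBot := by
    apply Filter.Tendsto.atBot_div_const (by norm_num)
    exact Filter.tendsto_neg_atBot_iff.2 (tendsto_pow_atTop (by norm_num))
  have h2 := Real.tendsto_exp_atBot.comp h1
  have h3 := h2.div_const (Real.sqrt (2*Real.pi))
  rw [zero_div] at h3
  exact h3.congr fun x => rfl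

lemma gammaFn_gt (x : ℝ) : x < gammaFn x := by
  rcases le_or_gt x 0 with hx | hx
  · have h1 := ncdf_le_one x
    have h2 := npdf_pos x
    unfold gammaFn; nlinarith
  · have hioi : ∫ u in Set.Ioi x, npdf u = 1 - ncdf x := by
      have h := MeasureTheory.integral_add_compl (measurableSet_Iic (a := x)) npdf_integrable
      rw [Set.compl_Iic, integral_npdf] at h
      have h2 : ncdf x = ∫ u in Set.Iic x, npdf u := rfl
      linarith [h]
    have hmu : ∫ u in Set.Ioi x, u * npdf u = npdf x := by
      have hder : ∀ u ∈ Set.Ici x, HasDerivAt (fun y => -npdf y) (u * npdf u) u := by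
        intro u _
        have := (npdf_hasDerivAt u).neg
        exact this.congr_deriv (by ring)
      have := MeasureTheory.integral_Ioi_of_hasDerivAt_of_tendsto' hder
        mul_npdf_integrable.integrableOn npdf_tendsto.neg
      rw [this]; simp
    have hintOn : MeasureTheory.IntegrableOn (fun u => (u - x) * npdf u) (Set.Ioi x) := by
      have h := mul_npdf_integrable.integrableOn.sub
        ((npdf_integrable.integrableOn (s := Set.Ioi x)).const_mul x)
      exact h.congr (Filter.Eventually.of_forall fun u => by
        simp only [Pi.sub_apply]; ring)
    have hpos : 0 < ∫ u in Set.Ioi x, (u - x) * npdf u := by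
      rw [MeasureTheory.setIntegral_pos_iff_support_of_nonneg_ae ?_ hintOn]
      · refine lt_of_lt_of_le ?_ (MeasureTheory.measure_mono
          (?_ : Set.Ioi x ⊆ Function.support (fun u => (u - x) * npdf u) ∩ Set.Ioi x))
        · rw [Real.volume_Ioi]; exact ENNReal.zero_lt_top
        · intro u hu
          have h1 : x < u := hu
          have h2 := npdf_pos u
          exact ⟨by simp only [Function.mem_support]; nlinarith, hu⟩
      · filter_upwards [MeasureTheory.ae_restrict_mem measurableSet_Ioi] with u hu
        have h1 : x < u := hu
        have h2 := npdf_pos u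
        show (0:ℝ) ≤ (u - x) * npdf u
        nlinarith
    have hsplit : ∫ u in Set.Ioi x, (u - x) * npdf u
        = (∫ u in Set.Ioi x, u * npdf u) - x * ∫ u in Set.Ioi x, npdf u := by
      rw [← MeasureTheory.integral_const_mul, ← MeasureTheory.integral_sub
        mul_npdf_integrable.integrableOn ((npdf_integrable.integrableOn).const_mul x)]
      exact MeasureTheory.setIntegral_congr_fun measurableSet_Ioi (fun u _ => by ring)
    rw [hsplit, hmu, hioi] at hpos
    unfold gammaFn
    nlinarith

lemma gammaFn_zero_pos : 0 < gammaFn 0 := by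
  unfold gammaFn; simpa using npdf_pos 0

lemma scale_lemma {m c : ℝ} (hm : 0 ≤ m) (hc1 : 1 ≤ c) (hc2 : c ≤ 2) :
    gammaFn (2 * m) / 2 ≤ gammaFn (m * c) / c := by
  have hc0 : 0 < c := lt_of_lt_of_le one_pos hc1
  rcases eq_or_lt_of_le hm with h | h
  · rw [← h, mul_zero, zero_mul]
    exact div_le_div_of_nonneg_left gammaFn_zero_pos.le hc0 hc2
  · have ha : 0 < m * c := mul_pos h hc0
    have hab : m * c ≤ 2 * m := by nlinarith
    have hk := key2 ha hab
    rw [div_le_div_iff₀ (by norm_num) hc0]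
    have h2 : m * (gammaFn (2 * m) * c) ≤ m * (gammaFn (m * c) * 2) := by nlinarith [hk]
    exact le_of_mul_le_mul_left h2 h

lemma f_mono : Monotone (fun x => gammaFn (2 * x) / 2) := by
  intro x y hxy
  have := gammaFn_mono (by linarith : 2 * x ≤ 2 * y)
  linarith

lemma f_gt (x : ℝ) : x < gammaFn (2 * x) / 2 := by
  have := gammaFn_gt (2 * x)
  linarith

lemma iter_tendsto :
    Filter.Tendsto (fun n => (fun x => gammaFn (2 * x) / 2)^[n] 0) atTop atTop := by
  set f := fun x : ℝ => gammaFn (2 * x) / 2 with hf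
  have hmono : Monotone fun n => f^[n] 0 :=
    (strictMono_nat_of_lt_succ fun n => by
      rw [Function.iterate_succ_apply']; exact f_gt _).monotone
  rcases tendsto_of_monotone hmono with h | ⟨l, hl⟩
  · exact h
  · exfalso
    have h1 : Filter.Tendsto (fun n => f^[n + 1] 0) atTop (nhds l) :=
      hl.comp (Filter.tendsto_add_atTop_nat 1)
    have hfc : Continuous f := (gammaFn_cont.comp (continuous_const.mul continuous_id)).div_const 2
    have h2 : Filter.Tendsto (fun n => f (f^[n] 0)) atTop (nhds (f l)) :=
      (hfc.tendsto l).comp hl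
    have h3 : Filter.Tendsto (fun n => f^[n + 1] 0) atTop (nhds (f l)) :=
      h2.congr fun n => (Function.iterate_succ_apply' f n 0).symm
    have := tendsto_nhds_unique h1 h3
    exact absurd this.symm (ne_of_gt (f_gt l))


/-- with `μ_J^{(J)} = 0` and
`μ_j^{(J)} = √(j/(j+1)) γ(μ_{j+1}^{(J)} √((j+1)/j))`, one has
`μ_j ≥ γ(2μ_{j+1})/2`, hence `μ₁ ≥ f^{∘(J−1)}(0)` for `f(x) = γ(2x)/2`, and `μ₁ → ∞` as
`J → ∞`. -/
theorem statement13 (μ : ℕ → ℕ → ℝ)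
    (hμJ : ∀ J, μ J J = 0)
    (hμrec : ∀ J j, 1 ≤ j → j < J →
      μ J j = Real.sqrt ((j : ℝ) / ((j : ℝ) + 1)) *
        gammaFn (μ J (j + 1) * Real.sqrt (((j : ℝ) + 1) / (j : ℝ)))) :
    (∀ J j, 1 ≤ j → j < J → gammaFn (2 * μ J (j + 1)) / 2 ≤ μ J j) ∧
    (∀ J, 1 ≤ J → (fun x => gammaFn (2 * x) / 2)^[J - 1] 0 ≤ μ J 1) ∧
    Filter.Tendsto (fun J => μ J 1) Filter.atTop Filter.atTop := by
  have hnn : ∀ d J j, 1 ≤ j → j + d = J → 0 ≤ μ J j := by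
    intro d
    induction d with
    | zero =>
      intro J j h1 h2
      rw [show j = J by omega, hμJ]
    | succ d ih =>
      intro J j h1 h2
      have hj : j < J := by omega
      rw [hμrec J j h1 hj]
      have hm : 0 ≤ μ J (j + 1) := ih J (j + 1) (by omega) (by omega)
      have harg : 0 ≤ μ J (j + 1) * Real.sqrt (((j : ℝ) + 1) / (j : ℝ)) :=
        mul_nonneg hm (Real.sqrt_nonneg _)
      have hg := gammaFn_gt (μ J (j + 1) * Real.sqrt (((j : ℝ) + 1) / (j : ℝ)))
      exact mul_nonneg (Real.sqrt_nonneg _) (le_of_lt (lt_of_le_of_lt harg hg))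
  have hA : ∀ J j, 1 ≤ j → j < J → gammaFn (2 * μ J (j + 1)) / 2 ≤ μ J j := by
    intro J j h1 hj
    have hm : 0 ≤ μ J (j + 1) := hnn (J - (j + 1)) J (j + 1) (by omega) (by omega)
    have hjpos : (0 : ℝ) < (j : ℝ) := by exact_mod_cast Nat.pos_of_ne_zero (by omega)
    set c := Real.sqrt (((j : ℝ) + 1) / (j : ℝ)) with hc
    have hc1 : 1 ≤ c := Real.one_le_sqrt.2 ((le_div_iff₀ hjpos).2 (by linarith))
    have hc2 : c ≤ 2 := by
      calc c ≤ Real.sqrt 4 :=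
            Real.sqrt_le_sqrt ((div_le_iff₀ hjpos).2 (by nlinarith [hjpos, (by exact_mod_cast h1 : (1:ℝ) ≤ (j:ℝ))]))
        _ = 2 := by
            rw [show (4 : ℝ) = 2 ^ 2 by norm_num, Real.sqrt_sq (by norm_num)]
    have hc0 : 0 < c := lt_of_lt_of_le one_pos hc1
    have hsc : Real.sqrt ((j : ℝ) / ((j : ℝ) + 1)) = 1 / c := by
      rw [hc, one_div, ← Real.sqrt_inv]
      congr 1
      rw [inv_div]
    rw [hμrec J j h1 hj, hsc, one_div, ← div_eq_inv_mul]
    exact scale_lemma hm hc1 hc2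
  have hB : ∀ d J j, 1 ≤ j → j + d = J →
      (fun x => gammaFn (2 * x) / 2)^[d] 0 ≤ μ J j := by
    intro d
    induction d with
    | zero =>
      intro J j h1 h2
      simp only [Function.iterate_zero, id]
      rw [show j = J by omega, hμJ]
    | succ d ih =>
      intro J j h1 h2
      rw [Function.iterate_succ_apply']
      have h3 := ih J (j + 1) (by omega) (by omega)
      calc gammaFn (2 * (fun x => gammaFn (2 * x) / 2)^[d] 0) / 2
          ≤ gammaFn (2 * μ J (j + 1)) / 2 := f_mono h3
        _ ≤ μ J j := hA J j h1 (by omega)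
  refine ⟨hA, fun J hJ => hB (J - 1) J 1 le_rfl (by omega), ?_⟩
  apply Filter.tendsto_atTop_mono' Filter.atTop ?_
    (iter_tendsto.comp (Filter.tendsto_sub_atTop_nat 1))
  filter_upwards [Filter.eventually_ge_atTop 1] with J hJ
  exact hB (J - 1) J 1 le_rfl (by omega)

end
end
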